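/- arXiv:1108.6215 — 6 statements merged into one kernel-verified Lean document; each statement's English description precedes it below -/
import Mathlib

section
/- Let K/k be a finite extension of number fields of relative degree n, and let p be a prime ideal of O_k that is totally ramified in K/k, say pO_K = P^n. Suppose β ≡ α^n mod p for some α, β ∈ O_k \ p, and suppose there exists no b ∈ O_k with b ≡ β mod p, b = N_{K/k}(δ) for some δ ∈ O_K, and |N_{k/ℚ}(b)| < N(p). Then K is not norm-Euclidean. -/
open NumberField

/-- A number field is norm-Euclidean if every element of the field is within
norm-distance less than 1 of an algebraic integer. -/
def IsNormEuclidean (K : Type*) [Field K] [NumberField K] : Prop :=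
  ∀ ξ : K, ∃ η : 𝓞 K, |Algebra.norm ℚ (ξ - (η : K))| < 1

lemma IsNormEuclidean.abs_norm_lt {K : Type*} [Field K] [NumberField K]
    (h : IsNormEuclidean K) (a b : 𝓞 K) (hb : b ≠ 0) :
    ∃ η : 𝓞 K, |Algebra.norm ℚ ((a : K) - (b : K) * (η : K))| < |Algebra.norm ℚ (b : K)| := by
  obtain ⟨η, hη⟩ := h ((a : K) / (b : K))
  refine ⟨η, ?_⟩
  have hbK : (b : K) ≠ 0 := by simpa using hb
  have hbN : Algebra.norm ℚ (b : K) ≠ 0 := by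
    rw [Algebra.norm_ne_zero_iff]; exact hbK
  have he : (a : K) - (b : K) * (η : K) = ((a : K) / (b : K) - (η : K)) * (b : K) := by
    field_simp
  have hbpos : 0 < |Algebra.norm ℚ (b : K)| := abs_pos.mpr hbN
  calc |Algebra.norm ℚ ((a : K) - (b : K) * (η : K))|
      = |Algebra.norm ℚ ((a : K) / (b : K) - (η : K))| * |Algebra.norm ℚ (b : K)| := by
        rw [he, map_mul, abs_mul]
    _ < 1 * |Algebra.norm ℚ (b : K)| := by
        exact mul_lt_mul_of_pos_right hη hbpos
    _ = |Algebra.norm ℚ (b : K)| := one_mul _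

/-- A norm-Euclidean number field has a principal ideal ring of integers. -/
lemma IsNormEuclidean.isPrincipalIdealRing {K : Type*} [Field K] [NumberField K]
    (h : IsNormEuclidean K) : IsPrincipalIdealRing (𝓞 K) := by
  constructor
  intro I
  by_cases hI : I = ⊥
  · exact hI ▸ ⟨⟨0, (Submodule.span_zero_singleton _).symm⟩⟩
  · have hne : {m : ℕ | ∃ b : 𝓞 K, b ∈ I ∧ b ≠ 0 ∧ (Algebra.norm ℤ b).natAbs = m}.Nonempty := by
      obtain ⟨b, hbI, hb0⟩ := Submodule.exists_mem_ne_zero_of_ne_bot hI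
      exact ⟨_, b, hbI, hb0, rfl⟩
    obtain ⟨b, hbI, hb0, hbm⟩ := Nat.sInf_mem hne
    refine ⟨⟨b, le_antisymm ?_ ?_⟩⟩
    · intro a haI
      obtain ⟨η, hη⟩ := h.abs_norm_lt a b hb0
      set r : 𝓞 K := a - b * η with hrdef
      have hrI : r ∈ I := I.sub_mem haI (I.mul_mem_right η hbI)
      have hrK : ((r : K)) = (a : K) - (b : K) * (η : K) := by push_cast [hrdef]; ring
      have habs : |Algebra.norm ℚ (r : K)| < |Algebra.norm ℚ (b : K)| := by rw [hrK]; exact hη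
      have hnat : (Algebra.norm ℤ r).natAbs < (Algebra.norm ℤ b).natAbs := by
        have e1 : ((Algebra.norm ℤ r).natAbs : ℚ) = |Algebra.norm ℚ (r : K)| := by
          rw [← Algebra.coe_norm_int]; push_cast [Nat.cast_natAbs]; rfl
        have e2 : ((Algebra.norm ℤ b).natAbs : ℚ) = |Algebra.norm ℚ (b : K)| := by
          rw [← Algebra.coe_norm_int]; push_cast [Nat.cast_natAbs]; rfl
        exact_mod_cast e1 ▸ e2 ▸ habs
      rcases eq_or_ne r 0 with hr0 | hr0
      · have : a = b * η := by
          have := hrdef ▸ hr0; linear_combination this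
        rw [Ideal.submodule_span_eq, Ideal.mem_span_singleton']
        exact ⟨η, by rw [this]; ring⟩
      · exfalso
        have hle : sInf {m : ℕ | ∃ b : 𝓞 K, b ∈ I ∧ b ≠ 0 ∧ (Algebra.norm ℤ b).natAbs = m}
            ≤ (Algebra.norm ℤ r).natAbs := Nat.sInf_le ⟨r, hrI, hr0, rfl⟩
        omega
    · rw [Ideal.submodule_span_eq, Ideal.span_le, Set.singleton_subset_iff]
      exact hbI

set_option synthInstance.maxHeartbeats 1000000 in
set_option maxHeartbeats 4000000 in
/-- If `P` is the unique prime of `𝓞 K` above the maximal ideal `p` of `𝓞 k`, then for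
`δ ≡ α mod P` the relative norm of `δ` is congruent to `α ^ n` modulo `p`. -/
lemma norm_sub_pow_mem
    {k K : Type*} [Field k] [Field K] [NumberField k] [NumberField K] [Algebra k K]
    [FiniteDimensional k K]
    {n : ℕ} (hn : Module.finrank k K = n)
    {p : Ideal (𝓞 k)} (hpm : p.IsMaximal)
    {P : Ideal (𝓞 K)}
    (huniq : ∀ Q : Ideal (𝓞 K), Q.IsPrime → Q.comap (algebraMap (𝓞 k) (𝓞 K)) = p → Q = P)
    (α : 𝓞 k) (δ : 𝓞 K) (hδ : δ - algebraMap (𝓞 k) (𝓞 K) α ∈ P) :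
    RingOfIntegers.norm k δ - α ^ n ∈ p := by
  classical
  set E := AlgebraicClosure K with hE
  let C := integralClosure (𝓞 k) E
  have hinj : Function.Injective (algebraMap (𝓞 k) C) := by
    intro x y hxy
    have h1 : algebraMap (𝓞 k) E x = algebraMap (𝓞 k) E y := by
      rw [IsScalarTower.algebraMap_apply (𝓞 k) C E, hxy,
        ← IsScalarTower.algebraMap_apply (𝓞 k) C E]
    have h2 : Function.Injective (algebraMap (𝓞 k) E) := by
      rw [IsScalarTower.algebraMap_eq (𝓞 k) k E]
      exact (algebraMap k E).injective.comp (IsFractionRing.injective (𝓞 k) k)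
    exact h2 h1
  obtain ⟨M, hM, hMp⟩ := Ideal.exists_ideal_over_maximal_of_isIntegral (S := C) p
    (by rw [(RingHom.injective_iff_ker_eq_bot _).mp hinj]; exact bot_le)
  have hint : ∀ (σ : K →ₐ[k] E) (x : 𝓞 K),
      ((σ.restrictScalars (𝓞 k)).comp (IsScalarTower.toAlgHom (𝓞 k) (𝓞 K) K)) x ∈ C := by
    intro σ x
    exact (Algebra.IsIntegral.isIntegral (R := 𝓞 k) x).map
      ((σ.restrictScalars (𝓞 k)).comp (IsScalarTower.toAlgHom (𝓞 k) (𝓞 K) K))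
  let Φ : (K →ₐ[k] E) → (𝓞 K →ₐ[𝓞 k] C) := fun σ =>
    AlgHom.codRestrict ((σ.restrictScalars (𝓞 k)).comp (IsScalarTower.toAlgHom (𝓞 k) (𝓞 K) K))
      C (hint σ)
  have key : ∀ σ : K →ₐ[k] E, (Φ σ) δ - algebraMap (𝓞 k) C α ∈ M := by
    intro σ
    have h1 : (Φ σ) δ - algebraMap (𝓞 k) C α = (Φ σ) (δ - algebraMap (𝓞 k) (𝓞 K) α) := by
      rw [map_sub, AlgHom.commutes]
    rw [h1]
    have hQ : Ideal.comap ((Φ σ) : 𝓞 K →+* C) M = P := by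
      apply huniq
      · exact Ideal.IsPrime.comap _
      · rw [Ideal.comap_comap, AlgHom.comp_algebraMap, hMp]
    rw [← hQ] at hδ
    exact hδ
  have hprod : algebraMap (𝓞 k) C (RingOfIntegers.norm k δ) = ∏ σ : K →ₐ[k] E, (Φ σ) δ := by
    apply Subtype.coe_injective
    push_cast
    rw [show (algebraMap (𝓞 k) E) ((RingOfIntegers.norm k) δ)
          = algebraMap k E ((RingOfIntegers.norm k δ : k)) from by
        rw [IsScalarTower.algebraMap_apply (𝓞 k) k E]]
    rw [RingOfIntegers.coe_norm, Algebra.norm_eq_prod_embeddings]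
    rfl
  have hcard : Fintype.card (K →ₐ[k] E) = n := by rw [AlgHom.card k K E, hn]
  have hmem : algebraMap (𝓞 k) C (RingOfIntegers.norm k δ - α ^ n) ∈ M := by
    rw [map_sub, map_pow, ← Ideal.Quotient.eq, hprod, map_prod, map_pow]
    have : ∀ σ : K →ₐ[k] E,
        Ideal.Quotient.mk M ((Φ σ) δ) = Ideal.Quotient.mk M (algebraMap (𝓞 k) C α) :=
      fun σ => Ideal.Quotient.eq.mpr (key σ)
    rw [Finset.prod_congr rfl (fun σ _ => this σ), Finset.prod_const, Finset.card_univ, hcard]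
  rw [← hMp]
  exact hmem

set_option synthInstance.maxHeartbeats 1000000 in
set_option maxHeartbeats 4000000 in
theorem totally_ramified_norm_obstruction
    {k K : Type*} [Field k] [Field K] [NumberField k] [NumberField K] [Algebra k K]
    (n : ℕ) (hn : Module.finrank k K = n)
    (p : Ideal (𝓞 k)) (hp : p.IsPrime) (hp0 : p ≠ ⊥)
    (P : Ideal (𝓞 K)) (hP : P.IsPrime)
    (hram : Ideal.map (algebraMap (𝓞 k) (𝓞 K)) p = P ^ n)
    (α β : 𝓞 k) (hα : α ∉ p) (hβ : β ∉ p) (hcong : β - α ^ n ∈ p)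
    (hno : ¬ ∃ b : 𝓞 k, b - β ∈ p ∧
        (∃ δ : 𝓞 K, (b : k) = Algebra.norm k (δ : K)) ∧
        |Algebra.norm ℚ (b : k)| < (Ideal.absNorm p : ℚ)) :
    ¬ IsNormEuclidean K := by
  intro hNE
  haveI : FiniteDimensional k K := Module.Finite.of_restrictScalars_finite ℚ k K
  have hn1 : 0 < n := hn ▸ Module.finrank_pos
  haveI hpm : p.IsMaximal := hp.isMaximal hp0
  have hinj : Function.Injective (algebraMap (𝓞 k) (𝓞 K)) :=
    FaithfulSMul.algebraMap_injective _ _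
  have hP0 : P ≠ ⊥ := by
    intro h0
    apply hp0
    have hb : Ideal.map (algebraMap (𝓞 k) (𝓞 K)) p = ⊥ := by
      rw [hram, h0, ← Ideal.zero_eq_bot, zero_pow hn1.ne']
    exact (Ideal.map_eq_bot_iff_of_injective hinj).mp hb
  haveI hPmax : P.IsMaximal := hP.isMaximal hP0
  have huniq : ∀ Q : Ideal (𝓞 K), Q.IsPrime → Q.comap (algebraMap (𝓞 k) (𝓞 K)) = p → Q = P := by
    intro Q hQ hQp
    have h1 : Ideal.map (algebraMap (𝓞 k) (𝓞 K)) p ≤ Q := Ideal.map_le_iff_le_comap.mpr hQp.ge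
    rw [hram] at h1
    have h2 : P ≤ Q := hQ.le_of_pow_le h1
    exact (hPmax.eq_of_le hQ.ne_top h2).symm
  -- absNorm P = absNorm p
  have hmapne : Ideal.map (algebraMap (𝓞 k) (𝓞 K)) p ≠ ⊥ := by
    rw [Ne, Ideal.map_eq_bot_iff_of_injective hinj]; exact hp0
  have habs : Ideal.absNorm P = Ideal.absNorm p := by
    haveI : Module.Finite (𝓞 k) (𝓞 K) := ⟨IsNoetherian.noetherian ⊤⟩
    have h1 : Ideal.absNorm (Ideal.map (algebraMap (𝓞 k) (𝓞 K)) p) = Ideal.absNorm P ^ n := by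
      rw [hram, map_pow]
    haveI F1 : Finite (𝓞 k ⧸ p) := by
      rw [← Ideal.absNorm_ne_zero_iff]
      rwa [Ne, Ideal.absNorm_eq_zero_iff]
    haveI F2 : Finite (𝓞 K ⧸ Ideal.map (algebraMap (𝓞 k) (𝓞 K)) p) := by
      rw [← Ideal.absNorm_ne_zero_iff]
      rwa [Ne, Ideal.absNorm_eq_zero_iff]
    letI := Fintype.ofFinite (𝓞 k ⧸ p)
    letI := Fintype.ofFinite (𝓞 K ⧸ Ideal.map (algebraMap (𝓞 k) (𝓞 K)) p)
    letI := Ideal.Quotient.field p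
    have h2 : Ideal.absNorm (Ideal.map (algebraMap (𝓞 k) (𝓞 K)) p) = Ideal.absNorm p ^ n := by
      rw [Ideal.absNorm_apply, Submodule.cardQuot_apply, Ideal.absNorm_apply,
        Submodule.cardQuot_apply, Nat.card_eq_fintype_card, Nat.card_eq_fintype_card]
      rw [Module.card_eq_pow_finrank (K := 𝓞 k ⧸ p) (V := 𝓞 K ⧸ Ideal.map (algebraMap (𝓞 k) (𝓞 K)) p)]
      rw [Ideal.finrank_quotient_map p k K, hn]
    exact Nat.pow_left_injective hn1.ne' (h1.symm.trans h2)
  -- generator of P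
  obtain ⟨ϖ, hϖ⟩ := (hNE.isPrincipalIdealRing.principal P).principal
  rw [Ideal.submodule_span_eq] at hϖ
  have hϖP : ϖ ∈ P := hϖ ▸ Ideal.mem_span_singleton_self ϖ
  have hϖ0 : ϖ ≠ 0 := by
    intro h0
    apply hP0
    rw [hϖ, h0, ← Ideal.zero_eq_bot]
    exact Ideal.span_singleton_eq_bot.mpr rfl
  obtain ⟨η, hη⟩ := hNE.abs_norm_lt (algebraMap (𝓞 k) (𝓞 K) α) ϖ hϖ0
  set δ : 𝓞 K := algebraMap (𝓞 k) (𝓞 K) α - ϖ * η with hδdef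
  have hδP : δ - algebraMap (𝓞 k) (𝓞 K) α ∈ P := by
    have : δ - algebraMap (𝓞 k) (𝓞 K) α = -(ϖ * η) := by rw [hδdef]; ring
    rw [this]
    exact P.neg_mem (P.mul_mem_right η hϖP)
  set b : 𝓞 k := RingOfIntegers.norm k δ with hbdef
  apply hno
  refine ⟨b, ?_, ⟨δ, RingOfIntegers.coe_norm k δ⟩, ?_⟩
  · have h1 : b - α ^ n ∈ p := norm_sub_pow_mem hn hpm huniq α δ hδP
    have : b - β = (b - α ^ n) - (β - α ^ n) := by ring
    rw [this]
    exact p.sub_mem h1 hcong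
  · have e1 : Algebra.norm ℚ ((b : k)) = Algebra.norm ℚ (δ : K) := by
      rw [hbdef, RingOfIntegers.coe_norm, Algebra.norm_norm]
    have e2 : |Algebra.norm ℚ ((δ : K))| < |Algebra.norm ℚ ((ϖ : K))| := by
      have : ((δ : K)) = ((algebraMap (𝓞 k) (𝓞 K) α : 𝓞 K) : K) - (ϖ : K) * (η : K) := by
        rw [hδdef]; push_cast; ring
      rw [this]
      exact hη
    have e3 : |Algebra.norm ℚ ((ϖ : K))| = (Ideal.absNorm P : ℚ) := by
      rw [hϖ, Ideal.absNorm_span_singleton, ← Algebra.coe_norm_int]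
      push_cast [Nat.cast_natAbs]
      rfl
    rw [e1, ← habs, ← e3]
    exact e2
end

section
/- Let K be a totally imaginary quartic number field, p a rational prime totally ramified in K/ℚ, and suppose β ≡ α^4 mod p for some integers α, β not divisible by p. If no positive integer b < p with b ≡ β mod p is the norm of an element of O_K, then K is not norm-Euclidean. -/
open NumberField

/-- A number field is totally imaginary if no embedding into `ℂ` is real. -/
def IsTotallyImaginary (K : Type*) [Field K] [NumberField K] : Prop :=
  ∀ φ : K →+* ℂ, ¬ ComplexEmbedding.IsReal φ

private lemma aux_prod_pos {ι : Type*} [DecidableEq ι] (g : ι → ι) (f : ι → ℂ)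
    (hgg : ∀ i, g (g i) = i) (hgne : ∀ i, g i ≠ i)
    (hf : ∀ i, f (g i) = (starRingEnd ℂ) (f i)) (h0 : ∀ i, f i ≠ 0) :
    ∀ s : Finset ι, (∀ i ∈ s, g i ∈ s) →
      0 < (∏ i ∈ s, f i).re ∧ (∏ i ∈ s, f i).im = 0 := by
  intro s
  induction s using Finset.strongInduction with
  | _ s ih =>
    intro hs
    rcases s.eq_empty_or_nonempty with rfl | ⟨a, ha⟩
    · simp
    · have hga : g a ∈ s := hs a ha
      have hane : a ≠ g a := (hgne a).symm
      set s' : Finset ι := s \ {a, g a} with hs'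
      have hsub : {a, g a} ⊆ s := by
        intro i hi
        rcases Finset.mem_insert.mp hi with rfl | hi
        · exact ha
        · exact Finset.mem_singleton.mp hi ▸ hga
      have hunion : {a, g a} ∪ s' = s := Finset.union_sdiff_of_subset hsub
      have hdisj : Disjoint ({a, g a} : Finset ι) s' := Finset.disjoint_sdiff
      have hssub : s' ⊂ s := by
        refine Finset.ssubset_iff_of_subset (Finset.sdiff_subset) |>.mpr ?_
        exact ⟨a, ha, by simp [hs']⟩
      have hclosed : ∀ i ∈ s', g i ∈ s' := by
        intro i hi
        have hi1 := Finset.mem_sdiff.mp hi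
        refine Finset.mem_sdiff.mpr ⟨hs i hi1.1, ?_⟩
        intro hmem
        rcases Finset.mem_insert.mp hmem with h | h
        · have : i = g a := by rw [← hgg i, h]
          exact hi1.2 (by simp [this])
        · have : i = a := by
            have := Finset.mem_singleton.mp h
            have := congrArg g this
            rwa [hgg, hgg] at this
          exact hi1.2 (by simp [this])
      obtain ⟨ihre, ihim⟩ := ih s' hssub hclosed
      have hprod : ∏ i ∈ s, f i = (Complex.normSq (f a) : ℂ) * ∏ i ∈ s', f i := by
        rw [← hunion, Finset.prod_union hdisj, Finset.prod_pair hane, hf a,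
          Complex.mul_conj]
      constructor
      · rw [hprod]
        simp only [Complex.mul_re, Complex.ofReal_re, Complex.ofReal_im, zero_mul, sub_zero]
        exact mul_pos (Complex.normSq_pos.mpr (h0 a)) ihre
      · rw [hprod]
        simp only [Complex.mul_im, Complex.ofReal_re, Complex.ofReal_im, zero_mul, add_zero]
        rw [ihim, mul_zero]

private lemma norm_pos_of_ti {K : Type*} [Field K] [NumberField K]
    (him : IsTotallyImaginary K) (x : K) (hx : x ≠ 0) : 0 < Algebra.norm ℚ x := by
  classical
  have h := Algebra.norm_eq_prod_embeddings ℚ ℂ x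
  set g : (K →ₐ[ℚ] ℂ) → (K →ₐ[ℚ] ℂ) :=
    fun σ => ((starRingEnd ℂ : ℂ →+* ℂ).toRatAlgHom).comp σ with hg
  have hgg : ∀ σ, g (g σ) = σ := by
    intro σ; ext y; simp [hg, RingHom.toRatAlgHom]
  have hgne : ∀ σ, g σ ≠ σ := by
    intro σ hσ
    apply him σ.toRingHom
    rw [NumberField.ComplexEmbedding.isReal_iff]
    ext y
    have := congrArg (fun (τ : K →ₐ[ℚ] ℂ) => τ y) hσ
    simpa [hg] using this
  have hf : ∀ σ : K →ₐ[ℚ] ℂ, (g σ) x = (starRingEnd ℂ) (σ x) := fun σ => rfl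
  have h0 : ∀ σ : K →ₐ[ℚ] ℂ, σ x ≠ 0 := by
    intro σ hσ
    exact hx (by simpa [map_eq_zero_iff σ.toRingHom (RingHom.injective _)] using hσ)
  obtain ⟨hre, _⟩ := aux_prod_pos g (fun σ => σ x) hgg hgne hf h0 Finset.univ
    (fun i _ => Finset.mem_univ _)
  rw [← h] at hre
  have heq : (algebraMap ℚ ℂ (Algebra.norm ℚ x)).re = ((Algebra.norm ℚ x : ℚ) : ℝ) := by
    simp [Complex.ofReal_re]
  rw [heq] at hre
  exact_mod_cast hre

private lemma norm_int_congr {K : Type*} [Field K] [NumberField K]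
    (h4 : Module.finrank ℚ K = 4)
    (p : ℕ) (hp : p.Prime) (α : ℤ) (hα : ¬ (p : ℤ) ∣ α) (x : 𝓞 K)
    (hx4 : ∃ w : 𝓞 K, x ^ 4 = (p : 𝓞 K) * w) :
    (p : ℤ) ∣ Algebra.norm ℤ ((α : 𝓞 K) + x) - α ^ 4 := by
  classical
  haveI : Fact p.Prime := ⟨hp⟩
  obtain ⟨w, hw⟩ := hx4
  set ι := Module.Free.ChooseBasisIndex ℤ (𝓞 K)
  set b : Module.Basis ι ℤ (𝓞 K) := Module.Free.chooseBasis ℤ (𝓞 K)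
  have hcard : Fintype.card ι = 4 := by
    rw [← Module.finrank_eq_card_chooseBasisIndex, NumberField.RingOfIntegers.rank, h4]
  haveI : Nonempty ι := Fintype.card_pos_iff.mp (by rw [hcard]; norm_num)
  set B : (𝓞 K) →+* Matrix ι ι (ZMod p) :=
    ((Int.castRingHom (ZMod p)).mapMatrix).comp
      ((Algebra.leftMulMatrix b).toRingHom) with hB
  have hdet : ∀ y : 𝓞 K, ((Algebra.norm ℤ y : ℤ) : ZMod p) = (B y).det := by
    intro y
    rw [Algebra.norm_eq_matrix_det b y, hB]
    exact RingHom.map_det (Int.castRingHom (ZMod p)) _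
  set c : ZMod p := (α : ZMod p) with hc
  have hc0 : c ≠ 0 := by
    rw [hc, Ne, ZMod.intCast_zmod_eq_zero_iff_dvd]
    exact hα
  set N : Matrix ι ι (ZMod p) := B x with hN
  have hN4 : N ^ 4 = 0 := by
    rw [hN, ← map_pow, hw, map_mul, map_natCast B p, CharP.cast_eq_zero, zero_mul]
  have hBγ : B ((α : 𝓞 K) + x) = c • (1 : Matrix ι ι (ZMod p)) + N := by
    rw [map_add, map_intCast]
    congr 1
    rw [hc, Matrix.smul_one_eq_diagonal, ← Matrix.diagonal_intCast]
  have hcm : (c • (1 : Matrix ι ι (ZMod p)) + N).det = c ^ 4 := by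
    set N' : Matrix ι ι (ZMod p) := c⁻¹ • N with hN'
    have h1 : c • (1 : Matrix ι ι (ZMod p)) + N = c • ((1 : Matrix ι ι (ZMod p)) + N') := by
      rw [smul_add, hN', smul_smul, mul_inv_cancel₀ hc0, one_smul]
    have hN'4 : N' ^ 4 = 0 := by
      rw [hN', smul_pow, hN4, smul_zero]
    have hpow : ((1 : Matrix ι ι (ZMod p)) + N') ^ (p ^ 2) = 1 := by
      rw [add_pow_char_pow_of_commute p 2 (Commute.one_left N')]
      have hvan : N' ^ (p ^ 2) = 0 := by
        have hge : 4 ≤ p ^ 2 := by nlinarith [hp.two_le]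
        calc N' ^ (p ^ 2) = N' ^ 4 * N' ^ (p ^ 2 - 4) := by rw [← pow_add]; congr 1; omega
        _ = 0 := by rw [hN'4, zero_mul]
      rw [hvan, one_pow, add_zero]
    have h3 : ∀ z : ZMod p, z ^ (p ^ 2) = z := by
      intro z
      rw [pow_two, pow_mul, ZMod.pow_card, ZMod.pow_card]
    have hdet1 : ((1 : Matrix ι ι (ZMod p)) + N').det = 1 := by
      have h2 : (((1 : Matrix ι ι (ZMod p)) + N').det) ^ (p ^ 2) = 1 := by
        rw [← Matrix.det_pow, hpow, Matrix.det_one]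
      rw [← h3 (((1 : Matrix ι ι (ZMod p)) + N').det), h2]
    rw [h1, Matrix.det_smul, hcard, hdet1, mul_one]
  have hzero : ((Algebra.norm ℤ ((α : 𝓞 K) + x) - α ^ 4 : ℤ) : ZMod p) = 0 := by
    push_cast
    rw [hdet, hBγ, hcm, hc]
    ring
  exact (ZMod.intCast_zmod_eq_zero_iff_dvd _ p).mp hzero

private lemma exists_generator {K : Type*} [Field K] [NumberField K]
    (heuc : IsNormEuclidean K) (I : Ideal (𝓞 K)) (hI : I ≠ ⊥) :
    ∃ g : 𝓞 K, I = Ideal.span {g} := by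
  classical
  obtain ⟨x₀, hx₀I, hx₀⟩ := Submodule.exists_mem_ne_zero_of_ne_bot hI
  set S : Set ℕ := {n | ∃ x : 𝓞 K, x ∈ I ∧ x ≠ 0 ∧ (Algebra.norm ℤ x).natAbs = n} with hS
  have hSne : S.Nonempty := ⟨_, x₀, hx₀I, hx₀, rfl⟩
  obtain ⟨g, hgI, hg0, hgn⟩ : ∃ x : 𝓞 K, x ∈ I ∧ x ≠ 0 ∧ (Algebra.norm ℤ x).natAbs = sInf S :=
    Nat.sInf_mem hSne
  refine ⟨g, le_antisymm ?_ ?_⟩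
  · intro a haI
    rw [Ideal.mem_span_singleton]
    have hgK : ((g : K)) ≠ 0 := by
      simpa using hg0
    obtain ⟨η, hη⟩ := heuc ((a : K) / (g : K))
    set r : 𝓞 K := a - g * η with hr
    have hrI : r ∈ I := Submodule.sub_mem I haI (Ideal.mul_mem_right η I hgI)
    have hrK : ((r : K)) = ((a : K) / (g : K) - (η : K)) * (g : K) := by
      push_cast [hr]
      field_simp
    have hnorm : |Algebra.norm ℚ (r : K)| < |Algebra.norm ℚ (g : K)| := by
      rw [hrK, map_mul, abs_mul]
      have hgpos : 0 < |Algebra.norm ℚ (g : K)| := by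
        rw [abs_pos]
        exact (Algebra.norm_ne_zero_iff).mpr hgK
      calc |Algebra.norm ℚ ((a : K) / (g : K) - (η : K))| * |Algebra.norm ℚ (g : K)|
          < 1 * |Algebra.norm ℚ (g : K)| := by
            exact mul_lt_mul_of_pos_right hη hgpos
        _ = |Algebra.norm ℚ (g : K)| := one_mul _
    have hnat : (Algebra.norm ℤ r).natAbs < (Algebra.norm ℤ g).natAbs := by
      have h1 : ((Algebra.norm ℤ r).natAbs : ℚ) < ((Algebra.norm ℤ g).natAbs : ℚ) := by
        rw [Nat.cast_natAbs, Nat.cast_natAbs]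
        push_cast
        rw [Algebra.coe_norm_int, Algebra.coe_norm_int]
        exact hnorm
      exact_mod_cast h1
    have hr0 : r = 0 := by
      by_contra hr0
      have : sInf S ≤ (Algebra.norm ℤ r).natAbs := Nat.sInf_le ⟨r, hrI, hr0, rfl⟩
      omega
    refine ⟨η, ?_⟩
    have hra : a - g * η = 0 := hr ▸ hr0
    linear_combination hra
  · rw [Ideal.span_le, Set.singleton_subset_iff]
    exact hgI

theorem quartic_totally_ramified_obstruction
    {K : Type*} [Field K] [NumberField K] (him : IsTotallyImaginary K)
    (h4 : Module.finrank ℚ K = 4)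
    (p : ℕ) (hp : p.Prime) (P : Ideal (𝓞 K)) (hP : P.IsPrime)
    (hram : Ideal.span {(p : 𝓞 K)} = P ^ 4)
    (α β : ℤ) (hα : ¬ (p : ℤ) ∣ α) (hβ : ¬ (p : ℤ) ∣ β)
    (hcong : (p : ℤ) ∣ β - α ^ 4)
    (hno : ¬ ∃ b : ℕ, 0 < b ∧ b < p ∧ (p : ℤ) ∣ (b : ℤ) - β ∧
        ∃ δ : 𝓞 K, Algebra.norm ℚ (δ : K) = b) :
    ¬ IsNormEuclidean K := by
  intro heuc
  have hpK0 : ((p : ℕ) : 𝓞 K) ≠ 0 := by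
    exact_mod_cast Nat.cast_ne_zero.mpr hp.ne_zero
  have hPbot : P ≠ ⊥ := by
    intro h
    rw [h] at hram
    rw [← Ideal.zero_eq_bot, zero_pow (by norm_num : (4:ℕ) ≠ 0), Ideal.zero_eq_bot,
      Ideal.span_singleton_eq_bot] at hram
    exact hpK0 hram
  obtain ⟨π, hPπ⟩ := exists_generator heuc P hPbot
  have hπ0 : π ≠ 0 := by
    intro h
    apply hPbot
    rw [hPπ, h, Ideal.span_singleton_eq_bot.mpr rfl]
  have hassoc : Associated ((p : ℕ) : 𝓞 K) (π ^ 4) := by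
    rw [← Ideal.span_singleton_eq_span_singleton, ← Ideal.span_singleton_pow, ← hPπ]
    exact hram
  obtain ⟨u, hu⟩ := hassoc
  -- positivity of norms
  have npos : ∀ z : 𝓞 K, z ≠ 0 → 0 < Algebra.norm ℤ z := by
    intro z hz
    have h1 := norm_pos_of_ti him (z : K) (by simpa using hz)
    rw [← Algebra.coe_norm_int] at h1
    exact_mod_cast h1
  -- norm of the unit is 1
  have hu1 : Algebra.norm ℤ ((u : 𝓞 K)) = 1 := by
    have h1 : Algebra.norm ℤ ((u : 𝓞 K)) * Algebra.norm ℤ (((u⁻¹ : (𝓞 K)ˣ) : 𝓞 K)) = 1 := by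
      rw [← map_mul, Units.mul_inv, map_one]
    have h2 : 0 < Algebra.norm ℤ ((u : 𝓞 K)) := npos _ (Units.ne_zero u)
    rcases Int.isUnit_iff.mp (IsUnit.of_mul_eq_one _ h1) with h | h
    · exact h
    · omega
  have hnp : Algebra.norm ℤ (((p : ℕ) : 𝓞 K)) = (p : ℤ) ^ 4 := by
    have hcast : ((p : ℕ) : 𝓞 K) = algebraMap ℤ (𝓞 K) ((p : ℕ) : ℤ) := by push_cast; rfl
    rw [hcast, Algebra.norm_algebraMap_of_basis (Module.Free.chooseBasis ℤ (𝓞 K)),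
      ← Module.finrank_eq_card_chooseBasisIndex, NumberField.RingOfIntegers.rank, h4]
  have hNπ : Algebra.norm ℤ π = (p : ℤ) := by
    have h1 := congrArg (Algebra.norm ℤ) hu
    rw [map_mul, map_pow, hu1, mul_one, hnp] at h1
    have hπpos := npos π hπ0
    have hppos : (0 : ℤ) < (p : ℤ) := by exact_mod_cast hp.pos
    have h2 : (Algebra.norm ℤ π) ^ 4 = (p : ℤ) ^ 4 := h1.symm
    exact (pow_left_strictMonoOn₀ (by norm_num : (4:ℕ) ≠ 0)).injOn
      (by exact le_of_lt hπpos) (by exact le_of_lt hppos) h2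
  -- apply the Euclidean property
  have hpK : ((p : ℕ) : K) ≠ 0 := by
    exact_mod_cast Nat.cast_ne_zero.mpr hp.ne_zero
  obtain ⟨η, hη⟩ := heuc (((α : K) * (π : K) ^ 3) / ((p : ℕ) : K))
  set x : 𝓞 K := -(π * (((u⁻¹ : (𝓞 K)ˣ) : 𝓞 K) * η)) with hx
  set γ : 𝓞 K := (α : 𝓞 K) + x with hγ
  have huu : (u : 𝓞 K) * ((u⁻¹ : (𝓞 K)ˣ) : 𝓞 K) = 1 := u.mul_inv
  have hδ : (α : 𝓞 K) * π ^ 3 - ((p : ℕ) : 𝓞 K) * η = π ^ 3 * γ := by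
    rw [hγ, hx]
    linear_combination (-((((u⁻¹ : (𝓞 K)ˣ) : 𝓞 K)) * η)) * hu + (((p : ℕ) : 𝓞 K) * η) * huu
  have hcγ : (p : ℤ) ∣ Algebra.norm ℤ γ - α ^ 4 := by
    rw [hγ]
    refine norm_int_congr h4 p hp α hα x ⟨(u : 𝓞 K) * ((((u⁻¹ : (𝓞 K)ˣ) : 𝓞 K)) * η) ^ 4, ?_⟩
    rw [hx]
    linear_combination (-(((((u⁻¹ : (𝓞 K)ˣ) : 𝓞 K)) * η) ^ 4)) * hu
  have hγ0 : γ ≠ 0 := by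
    intro h
    rw [h, Algebra.norm_zero, zero_sub, dvd_neg] at hcγ
    exact hα ((Nat.prime_iff_prime_int.mp hp).dvd_of_dvd_pow hcγ)
  set m : ℤ := Algebra.norm ℤ γ with hm
  have hm0 : 0 < m := npos γ hγ0
  have hKδ : ((α : K)) * (π : K) ^ 3 - ((p : ℕ) : K) * (η : K) = (π : K) ^ 3 * (γ : K) := by
    have h := congrArg (fun z : 𝓞 K => (z : K)) hδ
    push_cast at h
    exact h
  have hmul : (((α : K) * (π : K) ^ 3) / ((p : ℕ) : K) - (η : K)) * ((p : ℕ) : K)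
      = (π : K) ^ 3 * (γ : K) := by
    rw [← hKδ]
    field_simp
  have hNγ : Algebra.norm ℚ ((γ : K)) = (m : ℚ) := by
    rw [hm, Algebra.coe_norm_int]
  have hNπK : Algebra.norm ℚ ((π : K)) = (p : ℚ) := by
    rw [← Algebra.coe_norm_int, hNπ]
    push_cast
    rfl
  have hNpK : Algebra.norm ℚ (((p : ℕ) : K)) = (p : ℚ) ^ 4 := by
    have hc : ((p : ℕ) : K) = algebraMap ℚ K ((p : ℕ) : ℚ) := by push_cast; rfl
    rw [hc, Algebra.norm_algebraMap, h4]
  have hval : Algebra.norm ℚ (((α : K) * (π : K) ^ 3) / ((p : ℕ) : K) - (η : K)) * (p : ℚ) ^ 4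
      = (p : ℚ) ^ 3 * (m : ℚ) := by
    have h := congrArg (Algebra.norm ℚ) hmul
    rw [map_mul, map_mul, map_pow, hNπK, hNγ, hNpK] at h
    exact h
  have hppos : (0 : ℚ) < (p : ℚ) := by exact_mod_cast hp.pos
  have hmQ : (m : ℚ) < (p : ℚ) := by
    have habs : |Algebra.norm ℚ (((α : K) * (π : K) ^ 3) / ((p : ℕ) : K) - (η : K))|
        * (p : ℚ) ^ 4 < 1 * (p : ℚ) ^ 4 :=
      mul_lt_mul_of_pos_right hη (by positivity)
    rw [one_mul] at habs
    have h2 : |(p : ℚ) ^ 3 * (m : ℚ)| < (p : ℚ) ^ 4 := by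
      rw [← hval, abs_mul, abs_of_pos (by positivity : (0:ℚ) < (p : ℚ) ^ 4)]
      exact habs
    have hmpos : (0 : ℚ) < (m : ℚ) := by exact_mod_cast hm0
    rw [abs_of_pos (by positivity)] at h2
    have h3 : (p : ℚ) ^ 3 * (m : ℚ) < (p : ℚ) ^ 3 * (p : ℚ) := by
      calc (p : ℚ) ^ 3 * (m : ℚ) < (p : ℚ) ^ 4 := h2
      _ = (p : ℚ) ^ 3 * (p : ℚ) := by ring
    exact lt_of_mul_lt_mul_left h3 (by positivity)
  have hmp : m < (p : ℤ) := by exact_mod_cast hmQ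
  refine hno ⟨m.toNat, ?_, ?_, ?_, γ, ?_⟩
  · omega
  · omega
  · have heq : m - β = (m - α ^ 4) - (β - α ^ 4) := by ring
    rw [Int.toNat_of_nonneg hm0.le, heq]
    exact dvd_sub hcγ hcong
  · rw [← Algebra.coe_norm_int, ← hm]
    exact_mod_cast congrArg (Int.cast : ℤ → ℚ) (Int.toNat_of_nonneg hm0.le).symm
end

section
/- Let L be a CM-field with maximal real subfield K. If L is norm-Euclidean but K is not norm-Euclidean, then N_{K/ℚ}(disc(L/K)) < 4^{[K:ℚ]}. -/
open NumberField

def IsTotallyReal (K : Type*) [Field K] [NumberField K] : Prop :=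
  ∀ φ : K →+* ℂ, ComplexEmbedding.IsReal φ

open Polynomial IntermediateField
open scoped nonZeroDivisors

lemma my_quad {F : Polynomial ℂ} (hm : F.Monic) (hd : F.natDegree = 2) {a b : ℂ}
    (ha : F.eval a = 0) (hb : F.eval b = 0) (hab : a ≠ b) :
    F.derivative.eval a = a - b := by
  have h2 : F.coeff 2 = 1 := by rw [← hd]; exact hm
  have key : ∀ x : ℂ, F.eval x = F.coeff 0 + F.coeff 1 * x + x ^ 2 := by
    intro x
    rw [eval_eq_sum_range, hd]
    simp only [Finset.sum_range_succ, Finset.sum_range_zero, h2]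
    ring
  have ha' := ha; rw [key] at ha'
  have hb' := hb; rw [key] at hb'
  have hsum : a + b + F.coeff 1 = 0 := by
    have h0 : (a - b) * (a + b + F.coeff 1) = 0 := by linear_combination ha' - hb'
    rcases mul_eq_zero.mp h0 with h | h
    · exact absurd (sub_eq_zero.mp h) hab
    · exact h
  have hdlt : F.derivative.natDegree < 2 := by
    rw [← hd]; exact natDegree_derivative_lt (by omega)
  rw [eval_eq_sum_range' hdlt]
  simp only [Finset.sum_range_succ, Finset.sum_range_zero, coeff_derivative, h2]
  push_cast
  linear_combination hsum

lemma my_abs_norm_prod (K : Type*) [Field K] [NumberField K] (x : K) :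
    (|Algebra.norm ℚ x| : ℝ) = ∏ φ : K →+* ℂ, ‖φ x‖ := by
  have h := Algebra.norm_eq_prod_embeddings ℚ ℂ (x := x)
  have h2 := congrArg (‖·‖) h
  rw [norm_prod] at h2
  rw [show (∏ φ : K →+* ℂ, ‖φ x‖) = ∏ σ : K →ₐ[ℚ] ℂ, ‖σ x‖ from
    Fintype.prod_equiv (RingHom.equivRatAlgHom K ℂ) _ _
      (fun φ => by simp [RingHom.equivRatAlgHom_apply])]
  rw [← h2, eq_ratCast]
  rw [show ((Algebra.norm ℚ x : ℚ) : ℂ) = (((Algebra.norm ℚ x : ℚ) : ℝ) : ℂ) by push_cast; rfl,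
    Complex.norm_real, Real.norm_eq_abs]

open IntermediateField
open scoped nonZeroDivisors

lemma my_perphi {K L : Type*} [Field K] [Field L] [NumberField K] [NumberField L] [Algebra K L]
    (hK : _root_.IsTotallyReal K) (hL : IsTotallyImaginary L)
    (hdeg : Module.finrank K L = 2)
    {α : L} (hint : IsIntegral K α) (hFtop : K⟮α⟯ = ⊤) (ξ : K) (φ : K →+* ℂ) :
    ‖φ (Algebra.norm K (Polynomial.aeval α (Polynomial.derivative (minpoly K α))))‖
      ≤ 4 * ‖φ (Algebra.norm K (algebraMap K L ξ - α))‖ := by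
  classical
  haveI : IsScalarTower ℚ K L := inferInstance
  haveI : FiniteDimensional K L := FiniteDimensional.right ℚ K L
  letI : Algebra K ℂ := φ.toAlgebra
  have halg : algebraMap K ℂ = φ := rfl
  have hcard : Fintype.card (L →ₐ[K] ℂ) = 2 := by rw [AlgHom.card]; exact hdeg
  have : Nonempty (L →ₐ[K] ℂ) := Fintype.card_pos_iff.mp (by rw [hcard]; norm_num)
  obtain ⟨ψ⟩ := this
  have hconjφ : ∀ k : K, (starRingEnd ℂ) (φ k) = φ k := fun k =>
    RingHom.congr_fun (ComplexEmbedding.isReal_iff.mp (hK φ)) k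
  have hψext : ∀ k : K, ψ (algebraMap K L k) = φ k := fun k => by
    rw [ψ.commutes k, halg]
  set ψ₂ : L →ₐ[K] ℂ := AlgHom.mk ((starRingEnd ℂ).comp ψ.toRingHom) (fun k => by
    show (starRingEnd ℂ) (ψ (algebraMap K L k)) = algebraMap K ℂ k
    rw [halg, hψext k]; exact hconjφ k) with hψ₂
  have hψ₂app : ∀ y : L, ψ₂ y = (starRingEnd ℂ) (ψ y) := fun y => rfl
  have hne : ψ₂ ≠ ψ := by
    intro hEq
    apply hL ψ.toRingHom
    rw [ComplexEmbedding.isReal_iff]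
    ext x
    rw [ComplexEmbedding.conjugate_coe_eq]
    exact AlgHom.congr_fun hEq x
  have huniv : (Finset.univ : Finset (L →ₐ[K] ℂ)) = {ψ₂, ψ} := by
    symm; apply Finset.eq_univ_of_card
    rw [Finset.card_insert_of_notMem (by simp [hne]), Finset.card_singleton, hcard]
  have h2 : ∀ y : L, φ (Algebra.norm K y) = ψ y * (starRingEnd ℂ) (ψ y) := by
    intro y
    have h := Algebra.norm_eq_prod_embeddings (K := K) (E := ℂ) (x := y)
    rw [halg] at h
    rw [h, huniv, Finset.prod_insert (by simp [hne]), Finset.prod_singleton, hψ₂app]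
    ring
  have hgen : Algebra.adjoin K {α} = ⊤ := by
    rw [← adjoin_simple_toSubalgebra_of_isAlgebraic hint.isAlgebraic, hFtop]
    simp
  have h3 : (starRingEnd ℂ) (ψ α) ≠ ψ α := by
    intro hEq
    apply hne
    have hle : Algebra.adjoin K {α} ≤ AlgHom.equalizer ψ₂ ψ := by
      apply Algebra.adjoin_le
      intro y hy
      rw [Set.mem_singleton_iff] at hy
      subst hy
      simp only [SetLike.mem_coe, AlgHom.mem_equalizer, hψ₂app]
      exact hEq
    apply AlgHom.ext
    intro x
    exact hle (hgen ▸ Algebra.mem_top)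
  set f := minpoly K α with hf
  have hmono : f.Monic := minpoly.monic hint
  have hfdeg : f.natDegree = 2 := by
    have h1 := IntermediateField.adjoin.finrank hint
    rw [hFtop, IntermediateField.finrank_top'] at h1
    rw [← h1, hdeg]
  set F := f.map φ with hF
  have hFm : F.Monic := hmono.map φ
  have hFdeg : F.natDegree = 2 := by rw [hF, hmono.natDegree_map, hfdeg]
  set a := ψ α with ha
  have hψaeval : ∀ p : Polynomial K, ψ (Polynomial.aeval α p) = Polynomial.eval a (p.map φ) := by
    intro p
    rw [Polynomial.aeval_def]
    show ψ.toRingHom (Polynomial.eval₂ (algebraMap K L) α p) = _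
    rw [Polynomial.hom_eval₂, Polynomial.eval_map]
    congr 1
    exact RingHom.ext hψext
  have hFa : F.eval a = 0 := by
    have h0 : Polynomial.aeval α f = 0 := by rw [hf]; exact minpoly.aeval K α
    have := hψaeval f
    rw [h0, map_zero] at this
    rw [hF]
    exact this.symm
  have hFb : F.eval ((starRingEnd ℂ) a) = 0 := by
    have hcomm : (starRingEnd ℂ) (F.eval a) = F.eval ((starRingEnd ℂ) a) := by
      rw [hF, Polynomial.eval_map, Polynomial.eval_map, Polynomial.hom_eval₂]
      congr 1
      exact RingHom.ext hconjφ
    rw [← hcomm, hFa, map_zero]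
  have hab : a ≠ (starRingEnd ℂ) a := Ne.symm h3
  have hda : F.derivative.eval a = a - (starRingEnd ℂ) a := my_quad hFm hFdeg hFa hFb hab
  have hDval : ψ (Polynomial.aeval α (Polynomial.derivative f)) = a - (starRingEnd ℂ) a := by
    rw [hψaeval, ← Polynomial.derivative_map, ← hF, hda]
  rw [h2, h2]
  have habs : ∀ w : ℂ, ‖w * (starRingEnd ℂ) w‖ = ‖w‖ ^ 2 := fun w => by
    rw [norm_mul, Complex.norm_conj, sq]
  rw [habs, habs, hDval]
  have h1 : ‖a - (starRingEnd ℂ) a‖ = 2 * |a.im| := by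
    rw [Complex.sub_conj, norm_mul, Complex.norm_I, mul_one, Complex.norm_real, Real.norm_eq_abs, abs_mul]
    norm_num
  have hz : ψ (algebraMap K L ξ - α) = φ ξ - a := by rw [map_sub, hψext]
  have him : |a.im| ≤ ‖ψ (algebraMap K L ξ - α)‖ := by
    rw [hz]
    have hre : (φ ξ).im = 0 := Complex.conj_eq_iff_im.mp (hconjφ ξ)
    have : (φ ξ - a).im = -a.im := by simp [Complex.sub_im, hre]
    calc |a.im| = |(φ ξ - a).im| := by rw [this, abs_neg]
    _ ≤ _ := Complex.abs_im_le_norm _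
  rw [h1]
  nlinarith [him, abs_nonneg a.im, norm_nonneg (ψ (algebraMap K L ξ - α))]


theorem cm_field_discriminant_bound
    {K L : Type*} [Field K] [Field L] [NumberField K] [NumberField L] [Algebra K L]
    (hK : _root_.IsTotallyReal K) (hL : IsTotallyImaginary L)
    (hdeg : Module.finrank K L = 2)
    (hLE : IsNormEuclidean L) (hKE : ¬ IsNormEuclidean K) :
    (Ideal.absNorm (Ideal.spanNorm (𝓞 K) (differentIdeal (𝓞 K) (𝓞 L))) : ℝ) <
      4 ^ Module.finrank ℚ K := by
  classical
  have hn4 : (0:ℝ) < 4 ^ Module.finrank ℚ K := by positivity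
  haveI : IsScalarTower ℚ K L := inferInstance
  haveI : FiniteDimensional K L := FiniteDimensional.right ℚ K L
  haveI hMfin : Module.Finite (𝓞 K) (𝓞 L) :=
    Module.Finite.of_restrictScalars_finite ℤ (𝓞 K) (𝓞 L)
  set_option synthInstance.maxHeartbeats 1000000 in
  haveI : Module.IsTorsionFree (𝓞 K) (𝓞 L) := inferInstance
  set_option synthInstance.maxHeartbeats 1000000 in
  haveI : IsIntegralClosure (𝓞 L) (𝓞 K) L := inferInstance
  set_option synthInstance.maxHeartbeats 1000000 in
  haveI hloc : IsLocalization (Algebra.algebraMapSubmonoid (𝓞 L) (𝓞 K)⁰) L :=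
    IsIntegralClosure.isLocalization (𝓞 K) K L (𝓞 L)
  -- a witness of failure of norm-Euclideanity of K
  rw [IsNormEuclidean] at hKE
  push_neg at hKE
  obtain ⟨ξ, hξ⟩ := hKE
  obtain ⟨η, hη⟩ := hLE (algebraMap K L ξ)
  set α : L := (η : L) with hα
  have hαK : α ∉ Set.range (algebraMap K L) := by
    rintro ⟨y, hy⟩
    have hyint : IsIntegral ℤ y := by
      apply IsIntegral.tower_bot_of_field (B := L)
      rw [hy]
      exact η.2
    have h1 := hξ ⟨y, hyint⟩
    have h2 : Algebra.norm ℚ (algebraMap K L ξ - α) = (Algebra.norm ℚ (ξ - y))^2 := by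
      rw [← hy, ← map_sub, ← Algebra.norm_norm (R := ℚ) (S := K), Algebra.norm_algebraMap,
        hdeg, map_pow]
    rw [h2, abs_pow] at hη
    have h1' : 1 ≤ |Algebra.norm ℚ (ξ - y)| := h1
    nlinarith [h1']
  have hint : IsIntegral K α := IsIntegral.of_finite K α
  have hFtop : K⟮α⟯ = ⊤ := by
    have hmul : Module.finrank K K⟮α⟯ * Module.finrank K⟮α⟯ L = 2 := by
      rw [Module.finrank_mul_finrank, hdeg]
    have hne1 : Module.finrank K K⟮α⟯ ≠ 1 := by
      intro h1eq
      rw [IntermediateField.finrank_eq_one_iff] at h1eq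
      have hbot := h1eq
      apply hαK
      have hmem : α ∈ K⟮α⟯ := IntermediateField.mem_adjoin_simple_self K α
      rw [hbot, IntermediateField.mem_bot] at hmem
      exact hmem
    have h2' : Module.finrank K K⟮α⟯ = 2 := by
      rcases (Nat.prime_two).eq_one_or_self_of_dvd _ ⟨_, hmul.symm⟩ with h | h
      · exact absurd h hne1
      · exact h
    have hsub : Subalgebra.toSubmodule K⟮α⟯.toSubalgebra = ⊤ := by
      apply Submodule.eq_top_of_finrank_eq
      rw [hdeg]
      exact h2'
    apply IntermediateField.toSubalgebra_injective
    rw [IntermediateField.top_toSubalgebra]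
    exact Algebra.toSubmodule_eq_top.mp hsub
  have hηint : IsIntegral (𝓞 K) η := IsIntegralClosure.isIntegral (𝓞 K) L η
  have hgen' : Algebra.adjoin K {algebraMap (𝓞 L) L η} = ⊤ := by
    rw [show algebraMap (𝓞 L) L η = α from rfl,
      ← IntermediateField.adjoin_simple_toSubalgebra_of_isAlgebraic hint.isAlgebraic, hFtop]
    simp
  set D : 𝓞 L := Polynomial.aeval η (Polynomial.derivative (minpoly (𝓞 K) η)) with hDdef
  have hDmem : D ∈ differentIdeal (𝓞 K) (𝓞 L) :=
    aeval_derivative_mem_differentIdeal (𝓞 K) K L η hgen'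
  have hDL : algebraMap (𝓞 L) L D = Polynomial.aeval α (Polynomial.derivative (minpoly K α)) := by
    have hmin : minpoly K α = (minpoly (𝓞 K) η).map (algebraMap (𝓞 K) K) :=
      minpoly.isIntegrallyClosed_eq_field_fractions K L hηint
    rw [hmin, Polynomial.derivative_map, Polynomial.aeval_map_algebraMap,
      show α = algebraMap (𝓞 L) L η from rfl, Polynomial.aeval_algebraMap_apply]
  have hD0 : algebraMap (𝓞 L) L D ≠ 0 := by
    rw [hDL]
    exact (Algebra.IsSeparable.isSeparable K α).aeval_derivative_ne_zero (minpoly.aeval K α)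
  have hDne : D ≠ 0 := fun h => hD0 (by rw [h, map_zero])
  set c : 𝓞 K := Algebra.intNorm (𝓞 K) (𝓞 L) D with hc
  have hdvd : Ideal.absNorm (Ideal.spanNorm (𝓞 K) (differentIdeal (𝓞 K) (𝓞 L))) ∣
      (Algebra.norm ℤ c).natAbs := by
    rw [← Ideal.absNorm_span_singleton]
    apply Ideal.absNorm_dvd_absNorm_of_le
    rw [← Ideal.spanNorm_singleton (R := 𝓞 K)]
    apply Ideal.spanNorm_mono
    rwa [Ideal.span_singleton_le_iff_mem]
  have hcK : algebraMap (𝓞 K) K c = Algebra.norm K (algebraMap (𝓞 L) L D) :=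
    Algebra.algebraMap_intNorm (K := K) (L := L) D
  have hcne : algebraMap (𝓞 K) K c ≠ 0 := by
    rw [hcK]
    exact (Algebra.norm_ne_zero_iff).mpr hD0
  have hnc : (Algebra.norm ℤ c).natAbs ≠ 0 := by
    rw [Int.natAbs_ne_zero]
    apply (Algebra.norm_ne_zero_iff).mpr
    intro h
    exact hcne (by rw [h, map_zero])
  -- Step 1: absNorm ≤ |N(c)|
  have step1 : (Ideal.absNorm (Ideal.spanNorm (𝓞 K) (differentIdeal (𝓞 K) (𝓞 L))) : ℝ) ≤
      ((Algebra.norm ℤ c).natAbs : ℝ) := by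
    exact_mod_cast Nat.le_of_dvd (Nat.pos_of_ne_zero hnc) hdvd
  -- Step 2: |N(c)| as rational norm
  have step2 : ((Algebra.norm ℤ c).natAbs : ℝ) = ((|Algebra.norm ℚ (algebraMap (𝓞 K) K c)| : ℚ) : ℝ) := by
    have h1 : (Algebra.norm ℤ c : ℚ) = Algebra.norm ℚ (algebraMap (𝓞 K) K c) :=
      Algebra.coe_norm_int c
    rw [← h1]
    push_cast [Nat.cast_natAbs]
    ring
  -- Step 3: the analytic bound
  have step3 : ((|Algebra.norm ℚ (algebraMap (𝓞 K) K c)| : ℚ) : ℝ) ≤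
      4 ^ Module.finrank ℚ K * ((|Algebra.norm ℚ (algebraMap K L ξ - α)| : ℚ) : ℝ) := by
    have hrw : Algebra.norm ℚ (algebraMap K L ξ - α) =
        Algebra.norm ℚ (Algebra.norm K (algebraMap K L ξ - α)) :=
      (Algebra.norm_norm (R := ℚ) (S := K) (a := algebraMap K L ξ - α)).symm
    rw [hcK, hDL, hrw, Rat.cast_abs, Rat.cast_abs, my_abs_norm_prod, my_abs_norm_prod]
    calc ∏ φ : K →+* ℂ, ‖
          (φ (Algebra.norm K (Polynomial.aeval α (Polynomial.derivative (minpoly K α)))))‖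
        ≤ ∏ φ : K →+* ℂ, (4 * ‖(φ (Algebra.norm K (algebraMap K L ξ - α)))‖) := by
          apply Finset.prod_le_prod
          · intro _ _; exact norm_nonneg _
          · intro φ _; exact my_perphi hK hL hdeg hint hFtop ξ φ
      _ = 4 ^ Module.finrank ℚ K *
          ∏ φ : K →+* ℂ, ‖φ (Algebra.norm K (algebraMap K L ξ - α))‖ := by
          rw [Finset.prod_mul_distrib, Finset.prod_const, Finset.card_univ,
            NumberField.Embeddings.card K ℂ]
  have hq : ((|Algebra.norm ℚ (algebraMap K L ξ - α)| : ℚ) : ℝ) < 1 := by exact_mod_cast hη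
  calc (Ideal.absNorm (Ideal.spanNorm (𝓞 K) (differentIdeal (𝓞 K) (𝓞 L))) : ℝ)
      ≤ ((Algebra.norm ℤ c).natAbs : ℝ) := step1
    _ = ((|Algebra.norm ℚ (algebraMap (𝓞 K) K c)| : ℚ) : ℝ) := step2
    _ ≤ 4 ^ Module.finrank ℚ K * ((|Algebra.norm ℚ (algebraMap K L ξ - α)| : ℚ) : ℝ) := step3
    _ < 4 ^ Module.finrank ℚ K * 1 := by exact mul_lt_mul_of_pos_left hq hn4
    _ = 4 ^ Module.finrank ℚ K := mul_one _
end

section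
/- Let L be a CM-field with maximal real subfield K. If the relative different diff(L/K) is divisible by 2 (i.e. 2O_L divides diff(L/K)), then M(L) ≥ M(K)^2, where M(F) = sup over ξ ∈ F of inf over α ∈ O_F of |N_{F/ℚ}(ξ−α)| is the Euclidean minimum of F. -/
open NumberField

/-- The Euclidean minimum of a number field. -/
noncomputable def eucMin (K : Type*) [Field K] [NumberField K] : ℝ :=
  ⨆ ξ : K, ⨅ η : 𝓞 K, |((Algebra.norm ℚ (ξ - (η : K)) : ℚ) : ℝ)|

section Auxiliary

open ComplexConjugate
open scoped nonZeroDivisors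

/-- If `2` divides the relative different, traces of integers are divisible by `2`. -/
lemma aux_trace_div_two {K L : Type*} [Field K] [Field L] [NumberField K] [NumberField L]
    [Algebra K L]
    (hdiff : Ideal.span {(2 : 𝓞 L)} ∣ differentIdeal (𝓞 K) (𝓞 L)) (η : 𝓞 L) :
    ∃ t : 𝓞 K, Algebra.trace K L (η : L) = 2 * (t : K) := by
  have hle : differentIdeal (𝓞 K) (𝓞 L) ≤ Ideal.span {(2 : 𝓞 L)} := Ideal.le_of_dvd hdiff
  have h2 : (Ideal.span {(2 : 𝓞 L)} : Ideal (𝓞 L)) ≠ ⊥ := by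
    simp [Ideal.span_singleton_eq_bot]
  rw [differentialIdeal_le_iff (K := K) (L := L) h2] at hle
  have h2L : ((2 : L)⁻¹ * (η : L)) = ((2 : K)⁻¹) • (η : L) := by
    rw [Algebra.smul_def, map_inv₀, map_ofNat]
  have hmem : (2 : L)⁻¹ * (η : L) ∈
      ((((Ideal.span {(2 : 𝓞 L)} : Ideal (𝓞 L)) : FractionalIdeal (𝓞 L)⁰ L)⁻¹ :
        FractionalIdeal (𝓞 L)⁰ L) : Submodule (𝓞 L) L).restrictScalars (𝓞 K) := by
    rw [Submodule.restrictScalars_mem, FractionalIdeal.mem_coe,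
      FractionalIdeal.coeIdeal_span_singleton, FractionalIdeal.spanSingleton_inv,
      FractionalIdeal.mem_spanSingleton]
    refine ⟨η, ?_⟩
    rw [Algebra.smul_def]
    have : (algebraMap (𝓞 L) L) 2 = (2 : L) := map_ofNat _ 2
    rw [this, mul_comm]
  have := hle (Submodule.mem_map_of_mem hmem)
  rw [Submodule.mem_one] at this
  obtain ⟨t, ht⟩ := this
  refine ⟨t, ?_⟩
  rw [LinearMap.restrictScalars_apply, h2L, map_smul, smul_eq_mul] at ht
  field_simp at ht
  rw [← ht]; ring

/-- The key pointwise inequality at a point of `K`. -/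
theorem aux_key_ineq {K L : Type*} [Field K] [Field L] [NumberField K] [NumberField L]
    [Algebra K L]
    (hK : ∀ φ : K →+* ℂ, ComplexEmbedding.IsReal φ)
    (hL : ∀ φ : L →+* ℂ, ¬ ComplexEmbedding.IsReal φ)
    (hdeg : Module.finrank K L = 2)
    (ξ : K) (η : 𝓞 L) (t : 𝓞 K) (ht : Algebra.trace K L (η : L) = 2 * (t : K)) :
    |((Algebra.norm ℚ (ξ - (t : K)) : ℚ) : ℝ)| ^ 2
      ≤ |((Algebra.norm ℚ (algebraMap K L ξ - (η : L)) : ℚ) : ℝ)| := by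
  classical
  haveI : FiniteDimensional K L := FiniteDimensional.of_finrank_pos (by omega)
  set x : L := algebraMap K L ξ - (η : L) with hx
  set u : K := ξ - (t : K) with hu
  have habs : ∀ q : ℚ, |((q : ℚ) : ℝ)| = ‖(algebraMap ℚ ℂ) q‖ := by
    intro q
    rw [eq_ratCast (algebraMap ℚ ℂ) q,
      show ((q : ℚ) : ℂ) = (((q : ℚ) : ℝ) : ℂ) by push_cast; ring, Complex.norm_real, Real.norm_eq_abs]
  have claim : ∀ σ : K →ₐ[ℚ] ℂ,
      ‖σ (u ^ 2)‖ ≤ ‖σ (Algebra.norm K x)‖ := by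
    intro σ
    have hσreal : ∀ k : K, conj (σ k) = σ k := by
      intro k
      have h := RingHom.congr_fun (ComplexEmbedding.isReal_iff.mp (hK σ.toRingHom)) k
      simpa using h
    letI : Algebra K ℂ := σ.toRingHom.toAlgebra
    have halg : ∀ k : K, algebraMap K ℂ k = σ k := fun k => rfl
    have hcard : Fintype.card (L →ₐ[K] ℂ) = 2 := by rw [AlgHom.card]; exact hdeg
    obtain ⟨τ⟩ : Nonempty (L →ₐ[K] ℂ) := Fintype.card_pos_iff.mp (by omega)
    let τ' : L →ₐ[K] ℂ :=
      { toRingHom := (starRingEnd ℂ).comp τ.toRingHom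
        commutes' := fun k => by
          show conj (τ (algebraMap K L k)) = algebraMap K ℂ k
          rw [AlgHom.commutes, halg]
          exact hσreal k }
    have hτ' : ∀ z : L, τ' z = conj (τ z) := fun z => rfl
    have hτne : τ ≠ τ' := by
      intro h
      apply hL τ.toRingHom
      rw [ComplexEmbedding.isReal_iff]
      ext z
      rw [ComplexEmbedding.conjugate_coe_eq]
      exact ((congrArg (fun f => f z) h).symm : _)
    have huniv : (Finset.univ : Finset (L →ₐ[K] ℂ)) = {τ, τ'} := by
      symm
      apply Finset.eq_univ_of_card
      rw [Finset.card_insert_of_notMem (by simpa using hτne), Finset.card_singleton, hcard]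
    have hprod : ∀ y : L, algebraMap K ℂ (Algebra.norm K y) = τ y * conj (τ y) := by
      intro y
      rw [Algebra.norm_eq_prod_embeddings, huniv,
        Finset.prod_insert (by simpa using hτne), Finset.prod_singleton, hτ']
    have hsum : algebraMap K ℂ (Algebra.trace K L (η : L)) = τ (η : L) + conj (τ (η : L)) := by
      rw [trace_eq_sum_embeddings, huniv,
        Finset.sum_insert (by simpa using hτne), Finset.sum_singleton, hτ']
    have htre : (σ (t : K)).re = (τ (η : L)).re := by
      have h1 : σ (Algebra.trace K L (η : L)) = τ (η : L) + conj (τ (η : L)) := by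
        rw [← halg]; exact hsum
      rw [ht, map_mul, map_ofNat] at h1
      have h3 := congrArg Complex.re h1
      simp only [Complex.add_re, Complex.conj_re, Complex.mul_re] at h3
      norm_num at h3
      linarith
    have hσu : ((σ u).re : ℂ) = σ u := Complex.conj_eq_iff_re.mp (hσreal u)
    have hτx : τ x = σ ξ - τ (η : L) := by
      rw [hx, map_sub]
      congr 1
      rw [AlgHom.commutes]
      exact halg ξ
    have hxre : (τ x).re = (σ u).re := by
      rw [hτx, hu, map_sub, Complex.sub_re, Complex.sub_re, htre]
    have h1 : ‖σ (Algebra.norm K x)‖ = Complex.normSq (τ x) := by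
      rw [← halg, hprod, Complex.mul_conj, Complex.norm_real, Real.norm_eq_abs]
      exact abs_of_nonneg (Complex.normSq_nonneg _)
    have habsu : ‖σ u‖ = |(σ u).re| := by
      rw [← hσu]; exact Complex.norm_real _
    have h2 : ‖σ (u ^ 2)‖ = (σ u).re ^ 2 := by
      rw [map_pow, norm_pow, habsu, sq_abs]
    rw [h1, h2, Complex.normSq_apply, ← hxre]
    nlinarith [sq_nonneg ((τ x).im)]
  have hmain : ‖(algebraMap ℚ ℂ) (Algebra.norm ℚ (u ^ 2))‖
      ≤ ‖(algebraMap ℚ ℂ) (Algebra.norm ℚ (Algebra.norm K x))‖ := by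
    rw [Algebra.norm_eq_prod_embeddings ℚ ℂ (u ^ 2),
      Algebra.norm_eq_prod_embeddings ℚ ℂ (Algebra.norm K x), norm_prod, norm_prod]
    exact Finset.prod_le_prod (fun _ _ => norm_nonneg _) (fun σ _ => claim σ)
  calc |((Algebra.norm ℚ u : ℚ) : ℝ)| ^ 2
      = |((Algebra.norm ℚ (u ^ 2) : ℚ) : ℝ)| := by
        rw [map_pow]; push_cast; rw [abs_pow]
    _ = ‖(algebraMap ℚ ℂ) (Algebra.norm ℚ (u ^ 2))‖ := habs _
    _ ≤ ‖(algebraMap ℚ ℂ) (Algebra.norm ℚ (Algebra.norm K x))‖ := hmain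
    _ = |((Algebra.norm ℚ (Algebra.norm K x) : ℚ) : ℝ)| := (habs _).symm
    _ = |((Algebra.norm ℚ x : ℚ) : ℝ)| := by rw [Algebra.norm_norm]

/-- Bound on the norm of an element with small coordinates. -/
lemma aux_norm_bound {F ι : Type*} [Field F] [NumberField F] [Fintype ι] [DecidableEq ι]
    (b : Module.Basis ι ℚ F) (d : F) (h : ∀ i, |b.repr d i| ≤ 1/2) :
    |Algebra.norm ℚ d| ≤ Nat.factorial (Fintype.card ι) •
      (∑ i : ι, (1/2) * (∑ j : ι, ∑ k : ι, |Algebra.leftMulMatrix b (b i) j k|))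
        ^ (Fintype.card ι) := by
  set C0 : ℚ := ∑ i : ι, (1/2) * (∑ j : ι, ∑ k : ι, |Algebra.leftMulMatrix b (b i) j k|) with hC0
  have hentry : ∀ j k, |Algebra.leftMulMatrix b d j k| ≤ C0 := by
    intro j k
    have hdsum : d = ∑ i : ι, b.repr d i • b i := (Module.Basis.sum_repr b d).symm
    have hMd : Algebra.leftMulMatrix b d j k
        = ∑ i : ι, b.repr d i * Algebra.leftMulMatrix b (b i) j k := by
      rw [Algebra.leftMulMatrix_eq_repr_mul]
      conv_lhs => rw [hdsum]
      rw [Finset.sum_mul]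
      simp_rw [smul_mul_assoc]
      rw [map_sum]
      simp_rw [map_smul]
      rw [Finsupp.coe_finset_sum, Finset.sum_apply]
      refine Finset.sum_congr rfl fun i _ => ?_
      rw [Finsupp.smul_apply, smul_eq_mul, Algebra.leftMulMatrix_eq_repr_mul]
    rw [hMd, hC0]
    refine (Finset.abs_sum_le_sum_abs _ _).trans (Finset.sum_le_sum fun i _ => ?_)
    rw [abs_mul]
    have h1 : |Algebra.leftMulMatrix b (b i) j k|
        ≤ ∑ j' : ι, ∑ k' : ι, |Algebra.leftMulMatrix b (b i) j' k'| := by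
      calc |Algebra.leftMulMatrix b (b i) j k|
          ≤ ∑ k' : ι, |Algebra.leftMulMatrix b (b i) j k'| :=
            Finset.single_le_sum (f := fun k' => |Algebra.leftMulMatrix b (b i) j k'|)
              (fun _ _ => abs_nonneg _) (Finset.mem_univ k)
        _ ≤ ∑ j' : ι, ∑ k' : ι, |Algebra.leftMulMatrix b (b i) j' k'| :=
            Finset.single_le_sum (f := fun j' => ∑ k' : ι, |Algebra.leftMulMatrix b (b i) j' k'|)
              (fun _ _ => Finset.sum_nonneg fun _ _ => abs_nonneg _) (Finset.mem_univ j)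
    calc |b.repr d i| * |Algebra.leftMulMatrix b (b i) j k|
        ≤ (1/2) * (∑ j' : ι, ∑ k' : ι, |Algebra.leftMulMatrix b (b i) j' k'|) :=
          mul_le_mul (h i) h1 (abs_nonneg _) (by norm_num)
      _ = _ := rfl
  rw [Algebra.norm_eq_matrix_det b d]
  exact Matrix.det_le (A := Algebra.leftMulMatrix b d) (abv := AbsoluteValue.abs) hentry

/-- The family defining the Euclidean minimum is bounded above. -/
lemma aux_eucFamily_bddAbove (F : Type*) [Field F] [NumberField F] :
    BddAbove (Set.range fun ξ : F =>
      ⨅ η : 𝓞 F, |((Algebra.norm ℚ (ξ - (η : F)) : ℚ) : ℝ)|) := by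
  classical
  let b : Module.Basis (Module.Free.ChooseBasisIndex ℤ (𝓞 F)) ℚ F := NumberField.integralBasis F
  set n := Fintype.card (Module.Free.ChooseBasisIndex ℤ (𝓞 F)) with hn
  set C0 : ℚ := ∑ i, (1/2) * (∑ j, ∑ k, |Algebra.leftMulMatrix b (b i) j k|) with hC0
  refine ⟨((Nat.factorial n • C0 ^ n : ℚ) : ℝ), ?_⟩
  rintro y ⟨ξ, rfl⟩
  set α : 𝓞 F := ∑ i, round (b.repr ξ i) • (RingOfIntegers.basis F i) with hα
  have hαF : (α : F) = ∑ i, (round (b.repr ξ i) : ℚ) • b i := by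
    rw [hα]
    push_cast [map_sum]
    refine Finset.sum_congr rfl fun i _ => ?_
    rw [Int.cast_smul_eq_zsmul]
    simp [b, NumberField.integralBasis_apply, map_zsmul]
  set d : F := ξ - (α : F) with hd
  have hrepr : ∀ i, b.repr d i = b.repr ξ i - round (b.repr ξ i) := by
    intro i
    rw [hd, map_sub, hαF, map_sum, Finsupp.sub_apply]
    congr 1
    simp [map_smul, Module.Basis.repr_self, Finsupp.single_apply]
  have hsmall : ∀ i, |b.repr d i| ≤ 1/2 := by
    intro i
    rw [hrepr i]
    exact abs_sub_round _
  have hdet := aux_norm_bound b d hsmall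
  have hbdd : BddBelow (Set.range fun η : 𝓞 F => |((Algebra.norm ℚ (ξ - (η : F)) : ℚ) : ℝ)|) :=
    ⟨0, by rintro z ⟨η, rfl⟩; exact abs_nonneg _⟩
  calc (⨅ η : 𝓞 F, |((Algebra.norm ℚ (ξ - (η : F)) : ℚ) : ℝ)|)
      ≤ |((Algebra.norm ℚ (ξ - (α : F)) : ℚ) : ℝ)| := ciInf_le hbdd α
    _ ≤ ((Nat.factorial n • C0 ^ n : ℚ) : ℝ) := by
        rw [← hd, ← Rat.cast_abs]
        exact_mod_cast hdet

lemma aux_iInf_nonneg (F : Type*) [Field F] [NumberField F] (ξ : F) :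
    (0 : ℝ) ≤ ⨅ η : 𝓞 F, |((Algebra.norm ℚ (ξ - (η : F)) : ℚ) : ℝ)| :=
  le_ciInf fun _ => abs_nonneg _

end Auxiliary

theorem cm_field_eucMin_ge_sq
    {K L : Type*} [Field K] [Field L] [NumberField K] [NumberField L] [Algebra K L]
    (hK : _root_.IsTotallyReal K) (hL : _root_.IsTotallyImaginary L)
    (hdeg : Module.finrank K L = 2)
    (hdiff : Ideal.span {(2 : 𝓞 L)} ∣ differentIdeal (𝓞 K) (𝓞 L)) :
    eucMin L ≥ (eucMin K) ^ 2 := by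
  have hbL := aux_eucFamily_bddAbove L
  have hLnonneg : 0 ≤ eucMin L := Real.iSup_nonneg fun ξ => aux_iInf_nonneg L ξ
  have hKnonneg : 0 ≤ eucMin K := Real.iSup_nonneg fun ξ => aux_iInf_nonneg K ξ
  have key : ∀ ξ : K,
      (⨅ η : 𝓞 K, |((Algebra.norm ℚ (ξ - (η : K)) : ℚ) : ℝ)|) ^ 2 ≤ eucMin L := by
    intro ξ
    have h1 : ∀ η : 𝓞 L,
        (⨅ η' : 𝓞 K, |((Algebra.norm ℚ (ξ - (η' : K)) : ℚ) : ℝ)|) ^ 2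
          ≤ |((Algebra.norm ℚ (algebraMap K L ξ - (η : L)) : ℚ) : ℝ)| := by
      intro η
      obtain ⟨t, ht⟩ := aux_trace_div_two hdiff η
      have h2 := aux_key_ineq hK hL hdeg ξ η t ht
      have hbdd : BddBelow (Set.range fun η' : 𝓞 K =>
          |((Algebra.norm ℚ (ξ - (η' : K)) : ℚ) : ℝ)|) :=
        ⟨0, by rintro z ⟨η', rfl⟩; exact abs_nonneg _⟩
      have h3 : (⨅ η' : 𝓞 K, |((Algebra.norm ℚ (ξ - (η' : K)) : ℚ) : ℝ)|)
          ≤ |((Algebra.norm ℚ (ξ - (t : K)) : ℚ) : ℝ)| := ciInf_le hbdd t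
      have h4 := aux_iInf_nonneg K ξ
      calc (⨅ η' : 𝓞 K, |((Algebra.norm ℚ (ξ - (η' : K)) : ℚ) : ℝ)|) ^ 2
          ≤ |((Algebra.norm ℚ (ξ - (t : K)) : ℚ) : ℝ)| ^ 2 := by
            exact pow_le_pow_left₀ h4 h3 2
        _ ≤ _ := h2
    have h5 : (⨅ η' : 𝓞 K, |((Algebra.norm ℚ (ξ - (η' : K)) : ℚ) : ℝ)|) ^ 2
        ≤ ⨅ η : 𝓞 L, |((Algebra.norm ℚ (algebraMap K L ξ - (η : L)) : ℚ) : ℝ)| :=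
      le_ciInf h1
    have h6 : (⨅ η : 𝓞 L, |((Algebra.norm ℚ (algebraMap K L ξ - (η : L)) : ℚ) : ℝ)|)
        ≤ eucMin L := le_ciSup hbL (algebraMap K L ξ)
    exact h5.trans h6
  have hKle : eucMin K ≤ Real.sqrt (eucMin L) := by
    refine Real.iSup_le (fun ξ => ?_) (Real.sqrt_nonneg _)
    have h := key ξ
    nlinarith [Real.sq_sqrt hLnonneg, Real.sqrt_nonneg (eucMin L), aux_iInf_nonneg K ξ]
  calc (eucMin K) ^ 2 ≤ (Real.sqrt (eucMin L)) ^ 2 := pow_le_pow_left₀ hKnonneg hKle 2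
    _ = eucMin L := Real.sq_sqrt hLnonneg
end

section
/- If the ring of integers of an imaginary bicyclic quartic field K = ℚ(√m, √n) is norm-Euclidean and contains an element of norm 2, then each of the two imaginary quadratic subfields of K contains an algebraic integer of norm 2; consequently each imaginary quadratic subfield is ℚ(√−1), ℚ(√−2), or ℚ(√−7). -/
open NumberField

theorem key_lemma {K : Type*} [Field K] [NumberField K]
    (d : ℤ) (hd : d < 0) (s : K) (hs : s ^ 2 = (d : K))
    (x : 𝓞 K) (hx : |Algebra.norm ℚ ((x : K))| = 2) :
    ∃ a b : ℚ, IsIntegral ℤ ((a : K) + b * s) ∧ a ^ 2 - (d:ℚ) * b ^ 2 = 2 ∧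
      ∃ A : ℤ, (A : ℚ) = 2 * a := by
  have hd0 : d ≠ 0 := ne_of_lt hd
  have hdq : (d:ℚ) < 0 := by exact_mod_cast hd
  have hdK : (d : K) ≠ 0 := Int.cast_ne_zero.mpr hd0
  have hs0 : s ≠ 0 := by
    intro h; rw [h] at hs; simp at hs; exact hdK hs.symm
  have hsirr : ∀ q : ℚ, s ≠ (q : K) := by
    intro q hq
    have h1 : ((q : K)) ^ 2 = (d : K) := by rw [← hq, hs]
    have h2 : (q ^ 2 : ℚ) = (d : ℚ) := by exact_mod_cast h1
    nlinarith [sq_nonneg q]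
  have hzero : ∀ a b : ℚ, a ^ 2 - (d:ℚ) * b ^ 2 = 0 → a = 0 ∧ b = 0 := by
    intro a b hN
    have hb2 : b ^ 2 = 0 := by nlinarith [sq_nonneg a, sq_nonneg b]
    have ha2 : a ^ 2 = 0 := by nlinarith
    exact ⟨pow_eq_zero_iff two_ne_zero |>.mp ha2, pow_eq_zero_iff two_ne_zero |>.mp hb2⟩
  -- the subfield Q(s)
  set S : Subalgebra ℚ K :=
    { carrier := {y | ∃ a b : ℚ, y = (a : K) + b * s}
      mul_mem' := by
        rintro _ _ ⟨a, b, rfl⟩ ⟨c, e, rfl⟩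
        exact ⟨a * c + d * b * e, a * e + b * c, by push_cast; linear_combination (b : K) * (e : K) * hs⟩
      add_mem' := by
        rintro _ _ ⟨a, b, rfl⟩ ⟨c, e, rfl⟩
        exact ⟨a + c, b + e, by push_cast; ring⟩
      algebraMap_mem' := fun q => ⟨q, 0, by simp⟩ } with hSdef
  set F : IntermediateField ℚ K := S.toIntermediateField (by
    rintro _ ⟨a, b, rfl⟩
    by_cases hne : (a : K) + b * s = 0
    · exact ⟨0, 0, by rw [hne]; simp⟩
    · have hN0 : a ^ 2 - (d:ℚ) * b ^ 2 ≠ 0 := by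
        intro h; obtain ⟨h1, h2⟩ := hzero a b h
        exact hne (by rw [h1, h2]; push_cast; ring)
      have hNK : (((a ^ 2 - (d:ℚ) * b ^ 2) : ℚ) : K) ≠ 0 := by exact_mod_cast hN0
      refine ⟨a / (a ^ 2 - (d:ℚ) * b ^ 2), -b / (a ^ 2 - (d:ℚ) * b ^ 2),
        inv_eq_of_mul_eq_one_right ?_⟩
      push_cast at hNK ⊢
      field_simp
      have hNK' : (a:K) ^ 2 - (b:K) ^ 2 * (d:K) ≠ 0 := by rw [mul_comm]; exact hNK
      rw [div_eq_one_iff_eq hNK']; linear_combination (-(b:K) * (b:K)) * hs) with hFdef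
  have hmem : ∀ y : F, ∃ a b : ℚ, (y : K) = (a : K) + b * s := fun y => y.2
  have hsF : s ∈ F := ⟨0, 1, by simp⟩
  set s' : F := ⟨s, hsF⟩ with hs'def
  have hcoe : ∀ p q : ℚ, ((p • (1:F) + q • s' : F) : K) = (p : K) + q * s := by
    intro p q
    push_cast [hs'def]
    simp [Algebra.smul_def]
  have hli : LinearIndependent ℚ ![(1 : F), s'] := by
    rw [LinearIndependent.pair_iff]
    intro p q hpq
    have hK : (p : K) + q * s = 0 := by rw [← hcoe p q, hpq]; simp
    by_cases hq : q = 0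
    · subst hq
      refine ⟨?_, rfl⟩
      simpa using hK
    · exfalso
      apply hsirr (-p / q)
      have hqK : (q : K) ≠ 0 := by exact_mod_cast hq
      push_cast
      field_simp
      linear_combination hK
  have hsp : ⊤ ≤ Submodule.span ℚ (Set.range ![(1 : F), s']) := by
    intro y _
    obtain ⟨a, b, hy⟩ := hmem y
    have : y = a • (1:F) + b • s' := Subtype.ext (by rw [hcoe]; exact hy)
    rw [this]
    exact Submodule.add_mem _
      (Submodule.smul_mem _ _ (Submodule.subset_span ⟨0, rfl⟩))
      (Submodule.smul_mem _ _ (Submodule.subset_span ⟨1, rfl⟩))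
  set bF : Module.Basis (Fin 2) ℚ F := Module.Basis.mk hli hsp with hbF
  have hb0 : bF 0 = 1 := by rw [hbF, Module.Basis.mk_apply]; rfl
  have hb1 : bF 1 = s' := by rw [hbF, Module.Basis.mk_apply]; rfl
  haveI : FiniteDimensional F K := FiniteDimensional.right ℚ F K
  set α : F := Algebra.norm F (x : K) with hα
  have hαnorm : Algebra.norm ℚ α = Algebra.norm ℚ (x : K) := Algebra.norm_norm (R := ℚ) (S := F) (A := K) (a := (x : K))
  have hαint : IsIntegral ℤ α := Algebra.isIntegral_norm F x.2
  obtain ⟨a, b, hab⟩ := hmem α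
  have hαeq : α = a • (1:F) + b • s' := Subtype.ext (by rw [hcoe]; exact hab)
  have hmul0 : α * bF 0 = a • bF 0 + b • bF 1 := by rw [hb0, hb1, mul_one]; exact hαeq
  have hmul1 : α * bF 1 = ((d:ℚ) * b) • bF 0 + a • bF 1 := by
    rw [hb0, hb1]
    apply Subtype.ext
    rw [hcoe ((d:ℚ) * b) a]
    have : ((α * s' : F) : K) = (α : K) * s := by push_cast [hs'def]; ring
    rw [this, hab]
    push_cast
    linear_combination (b : K) * hs
  have e00 : Algebra.leftMulMatrix bF α 0 0 = a := by
    rw [Algebra.leftMulMatrix_eq_repr_mul, hmul0]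
    simp [Finsupp.single_apply]
  have e10 : Algebra.leftMulMatrix bF α 1 0 = b := by
    rw [Algebra.leftMulMatrix_eq_repr_mul, hmul0]
    simp [Finsupp.single_apply]
  have e01 : Algebra.leftMulMatrix bF α 0 1 = (d:ℚ) * b := by
    rw [Algebra.leftMulMatrix_eq_repr_mul, hmul1]
    simp [Finsupp.single_apply]
  have e11 : Algebra.leftMulMatrix bF α 1 1 = a := by
    rw [Algebra.leftMulMatrix_eq_repr_mul, hmul1]
    simp [Finsupp.single_apply]
  have hdet : Algebra.norm ℚ α = a ^ 2 - (d:ℚ) * b ^ 2 := by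
    rw [Algebra.norm_eq_matrix_det bF, Matrix.det_fin_two, e00, e01, e10, e11]
    ring
  have htr : Algebra.trace ℚ F α = 2 * a := by
    rw [Algebra.trace_eq_matrix_trace bF, Matrix.trace_fin_two, e00, e11]
    ring
  have heq2 : a ^ 2 - (d:ℚ) * b ^ 2 = 2 := by
    rcases abs_eq (by norm_num : (0:ℚ) ≤ 2) |>.mp hx with h | h
    · rw [← hdet, hαnorm, h]
    · exfalso
      have : a ^ 2 - (d:ℚ) * b ^ 2 = -2 := by rw [← hdet, hαnorm, h]
      nlinarith [sq_nonneg a, sq_nonneg b]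
  refine ⟨a, b, ?_, heq2, ?_⟩
  · rw [← hab]
    exact hαint.algebraMap
  · obtain ⟨A, hA⟩ := IsIntegrallyClosed.isIntegral_iff.mp (Algebra.isIntegral_trace (L := ℚ) hαint)
    exact ⟨A, by rw [← htr, ← hA]; simp⟩

theorem rat_of_sq (d : ℤ) (hsf : Squarefree d) (q : ℚ) (C : ℤ) (h : (C : ℚ) = d * q ^ 2) :
    ∃ B : ℤ, (B : ℚ) = q := by
  have hden : (q.den : ℚ) ≠ 0 := by exact_mod_cast q.den_nz
  have hnum : (q.num : ℚ) = q * q.den := by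
    exact (div_eq_iff hden).mp (Rat.num_div_den q)
  have hZ : C * (q.den : ℤ) ^ 2 = d * q.num ^ 2 := by
    have : (C : ℚ) * (q.den : ℚ) ^ 2 = (d : ℚ) * (q.num : ℚ) ^ 2 := by
      rw [h, hnum]; ring
    exact_mod_cast this
  have hcop : IsCoprime ((q.den : ℤ)) (q.num) := by
    rw [Int.isCoprime_iff_gcd_eq_one, Int.gcd]
    simpa [Nat.coprime_comm] using q.reduced
  have hdvd : ((q.den : ℤ)) ^ 2 ∣ d := by
    exact (hcop.pow (n := 2) (m := 2)).dvd_of_dvd_mul_right ⟨C, by linarith [hZ]⟩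
  have hunit : IsUnit ((q.den : ℤ)) := hsf _ (by rw [← pow_two]; exact hdvd)
  have hden1 : q.den = 1 := by
    rcases Int.isUnit_iff.mp hunit with h1 | h1 <;> omega
  exact ⟨q.num, by rw [hnum, hden1]; simp⟩

theorem arith_lemma (d A B : ℤ) (hd : d < 0) (hsf : Squarefree d) (h : A ^ 2 - d * B ^ 2 = 8) :
    d = -1 ∨ d = -2 ∨ d = -7 := by
  have hB : B ≠ 0 := by
    rintro rfl
    simp at h
    have h1 : A ≤ 2 := by nlinarith [sq_nonneg (A - 3)]
    have h2 : -2 ≤ A := by nlinarith [sq_nonneg (A + 3)]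
    interval_cases A <;> norm_num at h
  have hB2 : 1 ≤ B ^ 2 := by
    rcases lt_or_gt_of_ne hB with h' | h' <;> nlinarith
  have hd8 : -8 ≤ d := by
    nlinarith [mul_nonneg (by linarith : (0:ℤ) ≤ -d) (by linarith : (0:ℤ) ≤ B ^ 2 - 1), sq_nonneg A]
  have hA1 : A ≤ 3 := by nlinarith [sq_nonneg (A - 3), mul_nonneg (by linarith : (0:ℤ) ≤ -d) (sq_nonneg B)]
  have hA2 : -3 ≤ A := by nlinarith [sq_nonneg (A + 3), mul_nonneg (by linarith : (0:ℤ) ≤ -d) (sq_nonneg B)]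
  have hB1 : B ≤ 3 := by nlinarith [sq_nonneg (B - 3), sq_nonneg A]
  have hB3 : -3 ≤ B := by nlinarith [sq_nonneg (B + 3), sq_nonneg A]
  rw [pow_two, pow_two] at h
  have notsf : ∀ e c : ℤ, e = 2 * 2 * c → ¬ Squarefree e := by
    rintro e c rfl hsf'
    have := hsf' 2 ⟨c, rfl⟩
    rw [Int.isUnit_iff] at this
    omega
  interval_cases d
  · exact absurd hsf (notsf _ (-2) (by norm_num))
  · right; right; rfl
  · exfalso; interval_cases A <;> interval_cases B <;> omega
  · exfalso; interval_cases A <;> interval_cases B <;> omega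
  · exact absurd hsf (notsf _ (-1) (by norm_num))
  · exfalso; interval_cases A <;> interval_cases B <;> omega
  · right; left; rfl
  · left; rfl


/-- If a norm-Euclidean imaginary bicyclic quartic field `K = ℚ(√m, √n)`
contains an element of norm 2, then each imaginary quadratic subfield
`ℚ(√d) ⊆ K` (d < 0 squarefree) contains an algebraic integer of norm 2,
and hence is one of `ℚ(√-1)`, `ℚ(√-2)`, `ℚ(√-7)`. -/
theorem normEuclidean_with_norm_two_element
    {K : Type*} [Field K] [NumberField K]
    (m n : ℤ) (hmsf : Squarefree m) (hnsf : Squarefree n) (hmn : m ≠ n)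
    (him : IsTotallyImaginary K) (h4 : Module.finrank ℚ K = 4)
    (sm sn : K) (hsm : sm ^ 2 = (m : K)) (hsn : sn ^ 2 = (n : K))
    (hE : IsNormEuclidean K)
    (hx : ∃ x : 𝓞 K, |Algebra.norm ℚ ((x : K))| = 2) :
    ∀ d : ℤ, Squarefree d → d < 0 → ∀ s : K, s ^ 2 = (d : K) →
      (∃ a b : ℚ, IsIntegral ℤ ((a : K) + b * s) ∧ a ^ 2 - d * b ^ 2 = 2) ∧
      (d = -1 ∨ d = -2 ∨ d = -7) := by
  intro d hdsf hdneg s hseq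
  obtain ⟨x, hxn⟩ := hx
  obtain ⟨a, b, hint, heq, A, hA⟩ := key_lemma d hdneg s hseq x hxn
  refine ⟨⟨a, b, hint, heq⟩, ?_⟩
  obtain ⟨B, hB⟩ := rat_of_sq d hdsf (2 * b) (A ^ 2 - 8)
    (by push_cast; linear_combination ((A : ℚ) + 2 * a) * hA + 4 * heq)
  have hZ : A ^ 2 - d * B ^ 2 = 8 := by
    have : ((A ^ 2 - d * B ^ 2 : ℤ) : ℚ) = ((8 : ℤ) : ℚ) := by
      push_cast
      linear_combination ((A : ℚ) + 2 * a) * hA - ((d : ℚ) * ((B : ℚ) + 2 * b)) * hB + 4 * heq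
    exact_mod_cast this
  exact arith_lemma d A B hdneg hdsf hZ
end

section
/- The ring of integers of K = ℚ(i, √13) is not norm-Euclidean. -/
open NumberField

set_option linter.unusedSectionVars false
set_option maxHeartbeats 1000000

namespace G13

variable {K : Type*} [Field K] [CharZero K]

noncomputable def Ee (i s : K) (a b c d : ℚ) : K :=
  (a : K) + (b : K) * i + (c : K) * s + (d : K) * (i * s)

variable {i s : K}

lemma E_congr {a b c d a' b' c' d' : ℚ} (h1 : a = a') (h2 : b = b') (h3 : c = c')
    (h4 : d = d') : Ee i s a b c d = Ee i s a' b' c' d' := by rw [h1, h2, h3, h4]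

lemma E_mul (hi : i ^ 2 = -1) (hs : s ^ 2 = 13) (a b c d a' b' c' d' : ℚ) :
    Ee i s a b c d * Ee i s a' b' c' d' =
      Ee i s (a * a' - b * b' + 13 * (c * c' - d * d'))
        (a * b' + a' * b + 13 * (c * d' + c' * d))
        (a * c' + a' * c - (b * d' + b' * d))
        (a * d' + a' * d + b * c' + b' * c) := by
  unfold Ee
  push_cast
  linear_combination ((b : K) * b' + ((b : K) * d' + (d : K) * b') * s + (d : K) * d' * s ^ 2) * hi
    + ((c : K) * c' + ((c : K) * d' + (d : K) * c') * i - (d : K) * d') * hs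

lemma E_add (a b c d a' b' c' d' : ℚ) :
    Ee i s a b c d + Ee i s a' b' c' d' = Ee i s (a + a') (b + b') (c + c') (d + d') := by
  unfold Ee; push_cast; ring

lemma E_sub (a b c d a' b' c' d' : ℚ) :
    Ee i s a b c d - Ee i s a' b' c' d' = Ee i s (a - a') (b - b') (c - c') (d - d') := by
  unfold Ee; push_cast; ring

lemma E_rat (x : ℚ) : Ee i s x 0 0 0 = (x : K) := by unfold Ee; push_cast; ring

lemma E_one : Ee i s 1 0 0 0 = (1 : K) := by rw [E_rat]; norm_num

lemma E_two : Ee i s 2 0 0 0 = (2 : K) := by rw [E_rat]; norm_num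

lemma E_i : Ee i s 0 1 0 0 = i := by unfold Ee; push_cast; ring

lemma E_s : Ee i s 0 0 1 0 = s := by unfold Ee; push_cast; ring

lemma E_is : Ee i s 0 0 0 1 = i * s := by unfold Ee; push_cast; ring

/-! ### rationality facts -/

lemma rat_sq_ne_13 (e : ℚ) : e ^ 2 ≠ 13 := by
  intro h
  have h13 : Irrational (Real.sqrt ((13 : ℕ) : ℝ)) :=
    Nat.Prime.irrational_sqrt (by norm_num)
  apply h13
  refine ⟨|e|, ?_⟩
  have he : ((e : ℝ)) ^ 2 = 13 := by exact_mod_cast h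
  rw [Rat.cast_abs, show ((13 : ℕ) : ℝ) = 13 by norm_num, ← he, Real.sqrt_sq_eq_abs]

lemma pair_eq_zero (hi : i ^ 2 = -1) {x y : ℚ} (h : (x : K) + (y : K) * i = 0) :
    x = 0 ∧ y = 0 := by
  by_cases hy : y = 0
  · subst hy
    refine ⟨?_, rfl⟩
    have : (x : K) = 0 := by push_cast at h; linear_combination h
    exact_mod_cast this
  · exfalso
    have hyK : (y : K) ≠ 0 := by exact_mod_cast hy
    have h2 : ((x ^ 2 + y ^ 2 : ℚ) : K) = 0 := by
      push_cast
      linear_combination (x - (y : K) * i) * h + (y : K) ^ 2 * hi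
    have h3 : x ^ 2 + y ^ 2 = 0 := by exact_mod_cast h2
    have h4 : 0 < y ^ 2 := by positivity
    nlinarith [sq_nonneg x]

lemma s_ne_comb (hi : i ^ 2 = -1) (hs : s ^ 2 = 13) (e f : ℚ) :
    s ≠ (e : K) + (f : K) * i := by
  intro h
  have h13 : ((e ^ 2 - f ^ 2 - 13 : ℚ) : K) + ((2 * e * f : ℚ) : K) * i = 0 := by
    push_cast
    linear_combination (-(s : K) - (e : K) - (f : K) * i) * h + (-(f : K) ^ 2) * hi + hs
  obtain ⟨h1, h2⟩ := pair_eq_zero hi h13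
  have hef : e * f = 0 := by linarith
  rcases mul_eq_zero.mp hef with he | hf
  · nlinarith
  · exact rat_sq_ne_13 e (by nlinarith)

lemma s_ne_comb' (hi : i ^ 2 = -1) (hs : s ^ 2 = 13) {e f D : ℚ} (hD : D ≠ 0)
    (h : s * ((D : ℚ) : K) = (e : K) + (f : K) * i) : False := by
  apply s_ne_comb hi hs (e / D) (f / D)
  have hDK : ((D : ℚ) : K) ≠ 0 := by exact_mod_cast hD
  push_cast
  field_simp
  linear_combination h

lemma indep (hi : i ^ 2 = -1) (hs : s ^ 2 = 13) :
    LinearIndependent ℚ ![(1 : K), i, s, i * s] := by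
  rw [Fintype.linearIndependent_iff]
  intro g hg
  rw [Fin.sum_univ_four] at hg
  simp only [Matrix.cons_val_zero, Matrix.cons_val_one, Matrix.head_cons,
    Matrix.cons_val_two, Matrix.tail_cons, Matrix.cons_val_three, Matrix.head_fin_const] at hg
  rw [Rat.smul_def, Rat.smul_def, Rat.smul_def, Rat.smul_def, mul_one] at hg
  by_cases hc : g 2 = 0 ∧ g 3 = 0
  · obtain ⟨h2, h3⟩ := hc
    rw [h2, h3] at hg
    have hg' : ((g 0 : ℚ) : K) + ((g 1 : ℚ) : K) * i = 0 := by push_cast at hg ⊢; linear_combination hg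
    obtain ⟨e0, e1⟩ := pair_eq_zero hi hg'
    intro k
    fin_cases k <;> simp [e0, e1, h2, h3]
  · exfalso
    have hD : (g 2) ^ 2 + (g 3) ^ 2 ≠ 0 := by
      intro hD0
      exact hc ⟨by nlinarith [sq_nonneg (g 2), sq_nonneg (g 3)],
        by nlinarith [sq_nonneg (g 2), sq_nonneg (g 3)]⟩
    have key : s * (((g 2) ^ 2 + (g 3) ^ 2 : ℚ) : K) =
        ((-(g 0 * g 2 + g 1 * g 3) : ℚ) : K) + ((-(g 1 * g 2 - g 0 * g 3) : ℚ) : K) * i := by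
      push_cast
      linear_combination ((g 2 : K) - (g 3 : K) * i) * hg
        + ((g 3 : K) ^ 2 * s + (g 1 : K) * (g 3 : K)) * hi
    exact s_ne_comb' hi hs hD key

/-! ### parity -/

lemma two_dvd_of_sq_add_sq (X Y W : ℤ) (h : X ^ 2 + Y ^ 2 = 4 * W) : 2 ∣ X ∧ 2 ∣ Y := by
  rcases Int.even_or_odd X with ⟨k, hk⟩ | ⟨k, hk⟩ <;>
    rcases Int.even_or_odd Y with ⟨l, hl⟩ | ⟨l, hl⟩ <;> subst hk hl
  · exact ⟨⟨k, by ring⟩, ⟨l, by ring⟩⟩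
  · exfalso
    have h1 : 4 * (W - k * k - l * l - l) = 1 := by linear_combination -h
    omega
  · exfalso
    have h1 : 4 * (W - k * k - k - l * l) = 1 := by linear_combination -h
    omega
  · exfalso
    have h1 : 4 * (W - k * k - k - l * l - l) = 2 := by linear_combination -h
    omega

/-! ### 4x4 determinant -/

lemma det4 {R : Type*} [CommRing R] (a b c d : R) :
    Matrix.det !![a, -b, 13*c, -13*d; b, a, 13*d, 13*c; c, -d, a, -b; d, c, b, a]
      = (a^2 - b^2 - 13*c^2 + 13*d^2)^2 + (2*a*b - 26*c*d)^2 := by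
  rw [Matrix.det_succ_row_zero, Fin.sum_univ_four]
  have e0 : (!![a, -b, 13*c, -13*d; b, a, 13*d, 13*c; c, -d, a, -b; d, c, b, a]).submatrix
      Fin.succ (Fin.succAbove 0) = !![a, 13*d, 13*c; -d, a, -b; c, b, a] := by
    ext j k; fin_cases j <;> fin_cases k <;> rfl
  have e1 : (!![a, -b, 13*c, -13*d; b, a, 13*d, 13*c; c, -d, a, -b; d, c, b, a]).submatrix
      Fin.succ (Fin.succAbove 1) = !![b, 13*d, 13*c; c, a, -b; d, b, a] := by
    ext j k; fin_cases j <;> fin_cases k <;> rfl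
  have e2 : (!![a, -b, 13*c, -13*d; b, a, 13*d, 13*c; c, -d, a, -b; d, c, b, a]).submatrix
      Fin.succ (Fin.succAbove 2) = !![b, a, 13*c; c, -d, -b; d, c, a] := by
    ext j k; fin_cases j <;> fin_cases k <;> rfl
  have e3 : (!![a, -b, 13*c, -13*d; b, a, 13*d, 13*c; c, -d, a, -b; d, c, b, a]).submatrix
      Fin.succ (Fin.succAbove 3) = !![b, a, 13*d; c, -d, a; d, c, b] := by
    ext j k; fin_cases j <;> fin_cases k <;> rfl
  rw [e0, e1, e2, e3, Matrix.det_fin_three, Matrix.det_fin_three, Matrix.det_fin_three,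
    Matrix.det_fin_three]
  simp [Matrix.vecHead, Matrix.vecTail]
  ring

/-! ### multiplication by basis elements -/

lemma E_mul_i (hi : i ^ 2 = -1) (hs : s ^ 2 = 13) (a b c d : ℚ) :
    Ee i s a b c d * i = Ee i s (-b) a (-d) c := by
  have h := E_mul hi hs a b c d 0 1 0 0
  rw [E_i] at h
  rw [h]
  exact E_congr (by ring) (by ring) (by ring) (by ring)

lemma E_mul_s (hi : i ^ 2 = -1) (hs : s ^ 2 = 13) (a b c d : ℚ) :
    Ee i s a b c d * s = Ee i s (13 * c) (13 * d) a b := by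
  have h := E_mul hi hs a b c d 0 0 1 0
  rw [E_s] at h
  rw [h]
  exact E_congr (by ring) (by ring) (by ring) (by ring)

lemma E_mul_is (hi : i ^ 2 = -1) (hs : s ^ 2 = 13) (a b c d : ℚ) :
    Ee i s a b c d * (i * s) = Ee i s (-13 * d) (13 * c) (-b) a := by
  have h := E_mul hi hs a b c d 0 0 0 1
  rw [E_is] at h
  rw [h]
  exact E_congr (by ring) (by ring) (by ring) (by ring)

lemma fin4_mk0 (h : 0 < 4) : (⟨0, h⟩ : Fin 4) = (0 : Fin 4) := rfl

lemma fin4_mk1 (h : 1 < 4) : (⟨1, h⟩ : Fin 4) = (1 : Fin 4) := rfl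

lemma fin4_mk2 (h : 2 < 4) : (⟨2, h⟩ : Fin 4) = (2 : Fin 4) := rfl

lemma fin4_mk3 (h : 3 < 4) : (⟨3, h⟩ : Fin 4) = (3 : Fin 4) := rfl

/-! ### basis lemmas -/

lemma E_as_comb (bK : Module.Basis (Fin 4) ℚ K) (hb0 : bK 0 = 1) (hb1 : bK 1 = i) (hb2 : bK 2 = s)
    (hb3 : bK 3 = i * s) (a b c d : ℚ) :
    Ee i s a b c d = a • bK 0 + b • bK 1 + c • bK 2 + d • bK 3 := by
  rw [hb0, hb1, hb2, hb3, Rat.smul_def, Rat.smul_def, Rat.smul_def, Rat.smul_def]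
  unfold Ee; ring

lemma repr_E (bK : Module.Basis (Fin 4) ℚ K) (hb0 : bK 0 = 1) (hb1 : bK 1 = i) (hb2 : bK 2 = s)
    (hb3 : bK 3 = i * s) (a b c d : ℚ) (j : Fin 4) :
    bK.repr (Ee i s a b c d) j = ![a, b, c, d] j := by
  rw [E_as_comb bK hb0 hb1 hb2 hb3]
  simp only [map_add, map_smul, Module.Basis.repr_self, Finsupp.coe_add, Finsupp.coe_smul,
    Pi.add_apply, Pi.smul_apply, Finsupp.single_apply, smul_eq_mul]
  fin_cases j <;> simp only [fin4_mk0, fin4_mk1, fin4_mk2, fin4_mk3] <;>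
    simp +decide [Fin.ext_iff]

lemma eq_E (bK : Module.Basis (Fin 4) ℚ K) (hb0 : bK 0 = 1) (hb1 : bK 1 = i) (hb2 : bK 2 = s)
    (hb3 : bK 3 = i * s) (z : K) :
    z = Ee i s (bK.repr z 0) (bK.repr z 1) (bK.repr z 2) (bK.repr z 3) := by
  conv_lhs => rw [← bK.sum_repr z]
  rw [Fin.sum_univ_four, E_as_comb bK hb0 hb1 hb2 hb3]

lemma norm_E (hi : i ^ 2 = -1) (hs : s ^ 2 = 13) (bK : Module.Basis (Fin 4) ℚ K) (hb0 : bK 0 = 1)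
    (hb1 : bK 1 = i) (hb2 : bK 2 = s) (hb3 : bK 3 = i * s) (a b c d : ℚ) :
    Algebra.norm ℚ (Ee i s a b c d) =
      (a ^ 2 - b ^ 2 - 13 * c ^ 2 + 13 * d ^ 2) ^ 2 + (2 * a * b - 26 * c * d) ^ 2 := by
  rw [Algebra.norm_eq_matrix_det bK]
  have hM : Algebra.leftMulMatrix bK (Ee i s a b c d) =
      !![a, -b, 13 * c, -13 * d; b, a, 13 * d, 13 * c; c, -d, a, -b; d, c, b, a] := by
    ext j k
    rw [Algebra.leftMulMatrix_eq_repr_mul]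
    fin_cases k <;>
      simp only [fin4_mk0, fin4_mk1, fin4_mk2, fin4_mk3, hb0, hb1, hb2, hb3, mul_one,
        E_mul_i hi hs, E_mul_s hi hs, E_mul_is hi hs, repr_E bK hb0 hb1 hb2 hb3] <;>
      fin_cases j <;> simp only [fin4_mk0, fin4_mk1, fin4_mk2, fin4_mk3] <;>
    simp +decide [Fin.ext_iff]
  rw [hM, det4]

/-! ### building the conjugation maps -/

lemma mul_from_basis (bK : Module.Basis (Fin 4) ℚ K) {L : K →ₗ[ℚ] K}
    (h : ∀ j k : Fin 4, L (bK j * bK k) = L (bK j) * L (bK k)) (x y : K) :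
    L (x * y) = L x * L y := by
  conv_lhs => rw [← bK.sum_repr x, ← bK.sum_repr y]
  conv_rhs => rw [← bK.sum_repr x, ← bK.sum_repr y]
  simp only [Finset.sum_mul, Finset.mul_sum, smul_mul_assoc, mul_smul_comm, map_sum, map_smul]
  refine Finset.sum_congr rfl fun j _ => ?_
  congr 1
  refine Finset.sum_congr rfl fun k _ => ?_
  congr 1
  rw [h]

lemma exists_sigma (hi : i ^ 2 = -1) (hs : s ^ 2 = 13) (bK : Module.Basis (Fin 4) ℚ K)
    (hb0 : bK 0 = 1) (hb1 : bK 1 = i) (hb2 : bK 2 = s) (hb3 : bK 3 = i * s) :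
    ∃ σ : K →ₐ[ℚ] K, ∀ a b c d : ℚ, σ (Ee i s a b c d) = Ee i s a b (-c) (-d) := by
  set L : K →ₗ[ℚ] K := bK.constr ℚ ![(1 : K), i, -s, -(i * s)] with hL
  have hLE : ∀ a b c d : ℚ, L (Ee i s a b c d) = Ee i s a b (-c) (-d) := by
    intro a b c d
    rw [E_as_comb bK hb0 hb1 hb2 hb3]
    simp only [map_add, map_smul, hL, Module.Basis.constr_basis]
    rw [E_as_comb bK hb0 hb1 hb2 hb3 a b (-c) (-d)]
    rw [hb0, hb1, hb2, hb3]
    simp only [Matrix.cons_val_zero, Matrix.cons_val_one, Matrix.head_cons,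
      Matrix.cons_val_two, Matrix.tail_cons, Matrix.cons_val_three, Matrix.head_fin_const]
    simp only [Rat.smul_def]
    push_cast
    ring
  have hE0 : (1 : K) = Ee i s 1 0 0 0 := E_one.symm
  have hE1 : i = Ee i s 0 1 0 0 := E_i.symm
  have hE2 : s = Ee i s 0 0 1 0 := E_s.symm
  have hE3 : i * s = Ee i s 0 0 0 1 := E_is.symm
  have hone : L 1 = 1 := by rw [hE0, hLE]; norm_num [E_one]
  have hprod : ∀ a b c d a' b' c' d' : ℚ,
      L (Ee i s a b c d * Ee i s a' b' c' d') =
        L (Ee i s a b c d) * L (Ee i s a' b' c' d') := by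
    intro a b c d a' b' c' d'
    rw [E_mul hi hs, hLE, hLE, hLE, E_mul hi hs]
    exact E_congr (by ring) (by ring) (by ring) (by ring)
  have hB0 : bK 0 = Ee i s 1 0 0 0 := by rw [hb0]; exact E_one.symm
  have hB1 : bK 1 = Ee i s 0 1 0 0 := by rw [hb1]; exact E_i.symm
  have hB2 : bK 2 = Ee i s 0 0 1 0 := by rw [hb2]; exact E_s.symm
  have hB3 : bK 3 = Ee i s 0 0 0 1 := by rw [hb3]; exact E_is.symm
  have h16 : ∀ j k : Fin 4, L (bK j * bK k) = L (bK j) * L (bK k) := by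
    intro j k
    fin_cases j <;> fin_cases k <;>
      simp only [fin4_mk0, fin4_mk1, fin4_mk2, fin4_mk3, hB0, hB1, hB2, hB3] <;>
      exact hprod _ _ _ _ _ _ _ _
  exact ⟨AlgHom.ofLinearMap L hone (mul_from_basis bK h16), hLE⟩

lemma exists_tau (hi : i ^ 2 = -1) (hs : s ^ 2 = 13) (bK : Module.Basis (Fin 4) ℚ K)
    (hb0 : bK 0 = 1) (hb1 : bK 1 = i) (hb2 : bK 2 = s) (hb3 : bK 3 = i * s) :
    ∃ τ : K →ₐ[ℚ] K, ∀ a b c d : ℚ, τ (Ee i s a b c d) = Ee i s a (-b) c (-d) := by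
  set L : K →ₗ[ℚ] K := bK.constr ℚ ![(1 : K), -i, s, -(i * s)] with hL
  have hLE : ∀ a b c d : ℚ, L (Ee i s a b c d) = Ee i s a (-b) c (-d) := by
    intro a b c d
    rw [E_as_comb bK hb0 hb1 hb2 hb3]
    simp only [map_add, map_smul, hL, Module.Basis.constr_basis]
    rw [E_as_comb bK hb0 hb1 hb2 hb3 a (-b) c (-d)]
    rw [hb0, hb1, hb2, hb3]
    simp only [Matrix.cons_val_zero, Matrix.cons_val_one, Matrix.head_cons,
      Matrix.cons_val_two, Matrix.tail_cons, Matrix.cons_val_three, Matrix.head_fin_const]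
    simp only [Rat.smul_def]
    push_cast
    ring
  have hE0 : (1 : K) = Ee i s 1 0 0 0 := E_one.symm
  have hE1 : i = Ee i s 0 1 0 0 := E_i.symm
  have hE2 : s = Ee i s 0 0 1 0 := E_s.symm
  have hE3 : i * s = Ee i s 0 0 0 1 := E_is.symm
  have hone : L 1 = 1 := by rw [hE0, hLE]; norm_num [E_one]
  have hprod : ∀ a b c d a' b' c' d' : ℚ,
      L (Ee i s a b c d * Ee i s a' b' c' d') =
        L (Ee i s a b c d) * L (Ee i s a' b' c' d') := by
    intro a b c d a' b' c' d'
    rw [E_mul hi hs, hLE, hLE, hLE, E_mul hi hs]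
    exact E_congr (by ring) (by ring) (by ring) (by ring)
  have hB0 : bK 0 = Ee i s 1 0 0 0 := by rw [hb0]; exact E_one.symm
  have hB1 : bK 1 = Ee i s 0 1 0 0 := by rw [hb1]; exact E_i.symm
  have hB2 : bK 2 = Ee i s 0 0 1 0 := by rw [hb2]; exact E_s.symm
  have hB3 : bK 3 = Ee i s 0 0 0 1 := by rw [hb3]; exact E_is.symm
  have h16 : ∀ j k : Fin 4, L (bK j * bK k) = L (bK j) * L (bK k) := by
    intro j k
    fin_cases j <;> fin_cases k <;>
      simp only [fin4_mk0, fin4_mk1, fin4_mk2, fin4_mk3, hB0, hB1, hB2, hB3] <;>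
      exact hprod _ _ _ _ _ _ _ _
  exact ⟨AlgHom.ofLinearMap L hone (mul_from_basis bK h16), hLE⟩

/-! ### integrality transfer -/

lemma ratInt {x : ℚ} (h : IsIntegral ℤ ((x : K))) : ∃ n : ℤ, (n : ℚ) = x := by
  have hx : ((x : K)) = algebraMap ℚ K x := (eq_ratCast (algebraMap ℚ K) x).symm
  rw [hx] at h
  have h2 : IsIntegral ℤ x := IsIntegral.tower_bot (algebraMap ℚ K).injective h
  obtain ⟨n, hn⟩ := IsIntegrallyClosed.isIntegral_iff.mp h2
  exact ⟨n, by rw [← hn]; simp⟩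

lemma ratIntE (hi : i ^ 2 = -1) (hs : s ^ 2 = 13) {x : ℚ}
    (h : IsIntegral ℤ (Ee i s x 0 0 0)) : ∃ n : ℤ, (n : ℚ) = x := by
  rw [E_rat] at h
  exact ratInt h

lemma E_zero : Ee i s 0 0 0 0 = (0 : K) := by rw [E_rat]; norm_num

lemma int_i (hi : i ^ 2 = -1) : IsIntegral ℤ i := by
  refine ⟨Polynomial.X ^ 2 + 1, ?_, ?_⟩
  · apply Polynomial.monic_X_pow_add (n := 2)
    exact lt_of_le_of_lt Polynomial.degree_one_le (by decide)
  · simp [hi]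

lemma int_theta (hi : i ^ 2 = -1) (hs : s ^ 2 = 13) :
    IsIntegral ℤ (Ee i s (1/2) 0 (1/2) 0) := by
  have key : Ee i s (1/2) 0 (1/2) 0 * Ee i s (1/2) 0 (1/2) 0 - Ee i s (1/2) 0 (1/2) 0
      - Ee i s 3 0 0 0 = Ee i s 0 0 0 0 := by
    rw [E_mul hi hs, E_sub, E_sub]
    exact E_congr (by norm_num) (by norm_num) (by norm_num) (by norm_num)
  refine ⟨Polynomial.X ^ 2 - (Polynomial.X + Polynomial.C 3), ?_, ?_⟩
  · apply Polynomial.monic_X_pow_sub (n := 2)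
    rw [Polynomial.degree_X_add_C]
    decide
  · have h3 : (algebraMap ℤ K) 3 = Ee i s 3 0 0 0 := by rw [E_rat]; norm_num
    simp only [Polynomial.eval₂_sub, Polynomial.eval₂_add, Polynomial.eval₂_X_pow,
      Polynomial.eval₂_X, Polynomial.eval₂_C, h3]
    rw [sq, sub_add_eq_sub_sub, key, E_zero]

/-! ### the ring of integers lattice -/

lemma lattice (hi : i ^ 2 = -1) (hs : s ^ 2 = 13) (bK : Module.Basis (Fin 4) ℚ K)
    (hb0 : bK 0 = 1) (hb1 : bK 1 = i) (hb2 : bK 2 = s) (hb3 : bK 3 = i * s) :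
    ∀ p q r t : ℚ, IsIntegral ℤ (Ee i s p q r t) →
      ∃ A B C D : ℤ, p = A + C/2 ∧ q = B + D/2 ∧ r = C/2 ∧ t = D/2 := by
  obtain ⟨σ, hσ⟩ := exists_sigma hi hs bK hb0 hb1 hb2 hb3
  obtain ⟨τ, hτ⟩ := exists_tau hi hs bK hb0 hb1 hb2 hb3
  have hmapσ : ∀ {z : K}, IsIntegral ℤ z → IsIntegral ℤ (σ z) := fun hz => hz.map σ
  have hmapτ : ∀ {z : K}, IsIntegral ℤ z → IsIntegral ℤ (τ z) := fun hz => hz.map τ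
  have hiInt : IsIntegral ℤ i := int_i hi
  have hmiInt : IsIntegral ℤ (Ee i s 0 (-1) 0 0) := by
    have hne : Ee i s 0 (-1) 0 0 = -i := by unfold Ee; push_cast; ring
    rw [hne]; exact hiInt.neg
  have hθ : IsIntegral ℤ (Ee i s (1/2) 0 (1/2) 0) := int_theta hi hs
  have hiθ : IsIntegral ℤ (Ee i s 0 (1/2) 0 (1/2)) := by
    have hmul : i * Ee i s (1/2) 0 (1/2) 0 = Ee i s 0 (1/2) 0 (1/2) := by
      rw [mul_comm, E_mul_i hi hs]
      exact E_congr (by norm_num) (by norm_num) (by norm_num) (by norm_num)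
    rw [← hmul]; exact hiInt.mul hθ
  -- four times the first two coordinates are integers
  have L0 : ∀ p q r t : ℚ, IsIntegral ℤ (Ee i s p q r t) → ∃ n : ℤ, (n : ℚ) = 4 * p := by
    intro p q r t h
    have hsum : Ee i s p q r t + σ (Ee i s p q r t) + τ (Ee i s p q r t)
        + τ (σ (Ee i s p q r t)) = Ee i s (4 * p) 0 0 0 := by
      rw [hσ, hτ, hτ, E_add, E_add, E_add]
      exact E_congr (by ring) (by ring) (by ring) (by ring)
    refine ratIntE hi hs ?_
    rw [← hsum]
    exact ((h.add (hmapσ h)).add (hmapτ h)).add (hmapτ (hmapσ h))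
  have L0b : ∀ p q r t : ℚ, IsIntegral ℤ (Ee i s p q r t) → ∃ n : ℤ, (n : ℚ) = 4 * q := by
    intro p q r t h
    have hm : Ee i s p q r t * Ee i s 0 (-1) 0 0 = Ee i s q (-p) t (-r) := by
      rw [E_mul hi hs]
      exact E_congr (by ring) (by ring) (by ring) (by ring)
    exact L0 q (-p) t (-r) (by rw [← hm]; exact h.mul hmiInt)
  -- the relative norm coordinates are integers
  have L1 : ∀ p q r t : ℚ, IsIntegral ℤ (Ee i s p q r t) →
      (∃ n : ℤ, (n : ℚ) = p^2 - q^2 - 13*r^2 + 13*t^2)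
        ∧ (∃ n : ℤ, (n : ℚ) = 2*p*q - 26*r*t) := by
    intro p q r t h
    have hb : Ee i s p q r t * σ (Ee i s p q r t)
        = Ee i s (p^2 - q^2 - 13*r^2 + 13*t^2) (2*p*q - 26*r*t) 0 0 := by
      rw [hσ, E_mul hi hs]
      exact E_congr (by ring) (by ring) (by ring) (by ring)
    have hbi : IsIntegral ℤ (Ee i s (p^2 - q^2 - 13*r^2 + 13*t^2) (2*p*q - 26*r*t) 0 0) := by
      rw [← hb]; exact h.mul (hmapσ h)
    set x : ℚ := p^2 - q^2 - 13*r^2 + 13*t^2 with hxdef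
    set y : ℚ := 2*p*q - 26*r*t with hydef
    have h2x : ∃ n : ℤ, (n : ℚ) = 2*x := by
      refine ratIntE hi hs ?_
      have he : Ee i s x y 0 0 + τ (Ee i s x y 0 0) = Ee i s (2*x) 0 0 0 := by
        rw [hτ, E_add]
        exact E_congr (by ring) (by ring) (by ring) (by ring)
      rw [← he]; exact hbi.add (hmapτ hbi)
    have h2y : ∃ n : ℤ, (n : ℚ) = 2*y := by
      refine ratIntE hi hs ?_
      have he : (Ee i s x y 0 0 - τ (Ee i s x y 0 0)) * Ee i s 0 (-1) 0 0
          = Ee i s (2*y) 0 0 0 := by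
        rw [hτ, E_sub, E_mul hi hs]
        exact E_congr (by ring) (by ring) (by ring) (by ring)
      rw [← he]; exact (hbi.sub (hmapτ hbi)).mul hmiInt
    have hWW : ∃ n : ℤ, (n : ℚ) = x^2 + y^2 := by
      refine ratIntE hi hs ?_
      have he : Ee i s x y 0 0 * τ (Ee i s x y 0 0) = Ee i s (x^2 + y^2) 0 0 0 := by
        rw [hτ, E_mul hi hs]
        exact E_congr (by ring) (by ring) (by ring) (by ring)
      rw [← he]; exact hbi.mul (hmapτ hbi)
    obtain ⟨X2, hX2⟩ := h2x
    obtain ⟨Y2, hY2⟩ := h2y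
    obtain ⟨W, hW⟩ := hWW
    have key : X2^2 + Y2^2 = 4*W := by
      have hcast : ((X2^2 + Y2^2 : ℤ) : ℚ) = ((4*W : ℤ) : ℚ) := by
        push_cast
        rw [hX2, hY2, hW]; ring
      exact_mod_cast hcast
    obtain ⟨hdx, hdy⟩ := two_dvd_of_sq_add_sq X2 Y2 W key
    obtain ⟨X1, hX1⟩ := hdx
    obtain ⟨Y1, hY1⟩ := hdy
    constructor
    · refine ⟨X1, ?_⟩
      have : ((2*X1 : ℤ) : ℚ) = 2*x := by rw [← hX1]; push_cast at hX2 ⊢; linarith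
      push_cast at this; linarith
    · refine ⟨Y1, ?_⟩
      have : ((2*Y1 : ℤ) : ℚ) = 2*y := by rw [← hY1]; push_cast at hY2 ⊢; linarith
      push_cast at this; linarith
  -- p - 13 r and q - 13 t are integers
  have L2 : ∀ p q r t : ℚ, IsIntegral ℤ (Ee i s p q r t) → ∃ n : ℤ, (n : ℚ) = p - 13*r := by
    intro p q r t h
    obtain ⟨n1, hn1⟩ := (L1 p q r t h).1
    have hadd : Ee i s p q r t + Ee i s (1/2) 0 (1/2) 0 = Ee i s (p + 1/2) q (r + 1/2) t := by
      rw [E_add]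
      exact E_congr (by ring) (by ring) (by ring) (by ring)
    obtain ⟨n2, hn2⟩ := (L1 (p + 1/2) q (r + 1/2) t (by rw [← hadd]; exact h.add hθ)).1
    refine ⟨n2 - n1 + 3, ?_⟩
    push_cast
    rw [hn1, hn2]; ring
  have L2b : ∀ p q r t : ℚ, IsIntegral ℤ (Ee i s p q r t) → ∃ n : ℤ, (n : ℚ) = q - 13*t := by
    intro p q r t h
    obtain ⟨n1, hn1⟩ := (L1 p q r t h).1
    have hadd : Ee i s p q r t + Ee i s 0 (1/2) 0 (1/2) = Ee i s p (q + 1/2) r (t + 1/2) := by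
      rw [E_add]
      exact E_congr (by ring) (by ring) (by ring) (by ring)
    obtain ⟨n2, hn2⟩ := (L1 p (q + 1/2) r (t + 1/2) (by rw [← hadd]; exact h.add hiθ)).1
    refine ⟨n1 - n2 + 3, ?_⟩
    push_cast
    rw [hn1, hn2]; ring
  -- 2p and 2q are integers
  have hprodθ : ∀ p q r t : ℚ, Ee i s p q r t * Ee i s (1/2) 0 (1/2) 0
      = Ee i s ((p + 13*r)/2) ((q + 13*t)/2) ((p + r)/2) ((q + t)/2) := by
    intro p q r t
    rw [E_mul hi hs]
    exact E_congr (by ring) (by ring) (by ring) (by ring)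
  have L3 : ∀ p q r t : ℚ, IsIntegral ℤ (Ee i s p q r t) → ∃ n : ℤ, (n : ℚ) = 2*p := by
    intro p q r t h
    have hθint : IsIntegral ℤ
        (Ee i s ((p + 13*r)/2) ((q + 13*t)/2) ((p + r)/2) ((q + t)/2)) := by
      rw [← hprodθ]; exact h.mul hθ
    obtain ⟨n6, hn6⟩ := L2 _ _ _ _ hθint
    obtain ⟨n4, hn4⟩ := L0 p q r t h
    refine ⟨-n6 - n4, ?_⟩
    push_cast at hn6 hn4 ⊢
    linarith
  have L3b : ∀ p q r t : ℚ, IsIntegral ℤ (Ee i s p q r t) → ∃ n : ℤ, (n : ℚ) = 2*q := by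
    intro p q r t h
    have hθint : IsIntegral ℤ
        (Ee i s ((p + 13*r)/2) ((q + 13*t)/2) ((p + r)/2) ((q + t)/2)) := by
      rw [← hprodθ]; exact h.mul hθ
    obtain ⟨n6, hn6⟩ := L2b _ _ _ _ hθint
    obtain ⟨n4, hn4⟩ := L0b p q r t h
    refine ⟨-n6 - n4, ?_⟩
    push_cast at hn6 hn4 ⊢
    linarith
  -- endgame
  intro p q r t h
  obtain ⟨P, hP⟩ := L3 p q r t h
  obtain ⟨Q, hQ⟩ := L3b p q r t h
  obtain ⟨e, he⟩ := L2 p q r t h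
  obtain ⟨f, hf⟩ := L2b p q r t h
  obtain ⟨X, hX⟩ := (L1 p q r t h).1
  obtain ⟨Y, hY⟩ := (L1 p q r t h).2
  have hR : ((P - 2*e : ℤ) : ℚ) = 26*r := by push_cast; linarith
  have hT : ((Q - 2*f : ℤ) : ℚ) = 26*t := by push_cast; linarith
  set R : ℤ := P - 2*e with hRdef
  set T : ℤ := Q - 2*f with hTdef
  have hint1 : 676*X = 169*(P^2 - Q^2) - 13*(R^2 - T^2) := by
    have hcast : ((676*X : ℤ) : ℚ) = ((169*(P^2 - Q^2) - 13*(R^2 - T^2) : ℤ) : ℚ) := by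
      push_cast
      rw [hX, hP, hQ]
      push_cast at hR hT
      rw [hR, hT]
      ring
    exact_mod_cast hcast
  have hint2 : 26*Y = 13*(P*Q) - R*T := by
    have hcast : ((26*Y : ℤ) : ℚ) = ((13*(P*Q) - R*T : ℤ) : ℚ) := by
      push_cast
      rw [hY, hP, hQ]
      push_cast at hR hT
      rw [hR, hT]
      ring
    exact_mod_cast hcast
  have hp13 : Prime (13 : ℤ) := by norm_num
  have hd1 : (13 : ℤ) ∣ R*T := ⟨P*Q - 2*Y, by linarith⟩
  have hdvdsq : (13 : ℤ) ∣ R^2 - T^2 := ⟨P^2 - Q^2 - 4*X, by linarith⟩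
  have hboth : (13 : ℤ) ∣ R ∧ (13 : ℤ) ∣ T := by
    rcases hp13.dvd_mul.mp hd1 with hdR | hdT
    · refine ⟨hdR, hp13.dvd_of_dvd_pow (n := 2) ?_⟩
      have hTsq : T^2 = R^2 - (R^2 - T^2) := by ring
      rw [hTsq]
      exact dvd_sub (dvd_pow hdR (by norm_num)) hdvdsq
    · refine ⟨hp13.dvd_of_dvd_pow (n := 2) ?_, hdT⟩
      have hRsq : R^2 = T^2 + (R^2 - T^2) := by ring
      rw [hRsq]
      exact dvd_add (dvd_pow hdT (by norm_num)) hdvdsq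
  obtain ⟨⟨C, hC⟩, ⟨D, hD⟩⟩ := hboth
  have hCr : (C : ℚ) = 2*r := by
    have : ((13*C : ℤ) : ℚ) = 26*r := by rw [← hC]; exact hR
    push_cast at this; linarith
  have hDt : (D : ℚ) = 2*t := by
    have : ((13*D : ℤ) : ℚ) = 26*t := by rw [← hD]; exact hT
    push_cast at this; linarith
  refine ⟨e + 6*C, f + 6*D, C, D, ?_, ?_, ?_, ?_⟩
  · push_cast; linarith
  · push_cast; linarith
  · linarith
  · linarith

end G13

/-- The field `K = ℚ(i, √13)` is not norm-Euclidean. -/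
theorem gaussian_sqrt13_not_normEuclidean
    {K : Type*} [Field K] [NumberField K]
    (i : K) (hi : i ^ 2 = -1) (s : K) (hs : s ^ 2 = 13)
    (h4 : Module.finrank ℚ K = 4) :
    ¬ IsNormEuclidean K := by
  intro hNE
  have hli : LinearIndependent ℚ ![(1 : K), i, s, i * s] := G13.indep hi hs
  have hcard : Fintype.card (Fin 4) = Module.finrank ℚ K := by simp [h4]
  set bK : Module.Basis (Fin 4) ℚ K := basisOfLinearIndependentOfCardEqFinrank hli hcard with hbKdef
  have hbcoe : ⇑bK = ![(1 : K), i, s, i * s] :=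
    coe_basisOfLinearIndependentOfCardEqFinrank hli hcard
  have hb0 : bK 0 = 1 := by rw [hbcoe]; rfl
  have hb1 : bK 1 = i := by rw [hbcoe]; rfl
  have hb2 : bK 2 = s := by rw [hbcoe]; rfl
  have hb3 : bK 3 = i * s := by rw [hbcoe]; rfl
  set lam : K := G13.Ee i s (3/2) 1 (1/2) 0 with hlamdef
  have hNlam : Algebra.norm ℚ lam = 13 := by
    rw [hlamdef, G13.norm_E hi hs bK hb0 hb1 hb2 hb3]; norm_num
  have hlam0 : lam ≠ 0 := by
    intro h0
    have h00 := G13.repr_E bK hb0 hb1 hb2 hb3 (3/2) 1 (1/2) 0 0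
    rw [← hlamdef, h0] at h00
    simp at h00
    exact absurd h00 (by norm_num)
  obtain ⟨η, hη⟩ := hNE (2 * lam⁻¹)
  have hηInt : IsIntegral ℤ (η : K) := NumberField.RingOfIntegers.isIntegral_coe η
  have hηE := G13.eq_E bK hb0 hb1 hb2 hb3 (η : K)
  obtain ⟨A, B, C, D, hp, hq, hr, ht⟩ := G13.lattice hi hs bK hb0 hb1 hb2 hb3 _ _ _ _
    (by rw [← hηE]; exact hηInt)
  rw [hp, hq, hr, ht] at hηE
  set P : ℤ := 2 - A + B - 3*C with hPdef
  set Q : ℤ := -A - B - 3*D with hQdef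
  set R : ℤ := -(A + 2*C - D) with hRdef
  set T : ℤ := -(B + C + 2*D) with hTdef
  set X : ℤ := P^2 + P*R - Q^2 - Q*T - 3*R^2 + 3*T^2 with hXdef
  set Y : ℤ := 2*P*Q + P*T + Q*R - 6*R*T with hYdef
  set M : ℤ := 2*P^2 + 2*P*R + 2*Q^2 + 2*Q*T + 7*R^2 + 7*T^2 with hMdef
  set V : ℤ := 2*P*R + R^2 + 2*Q*T + T^2 with hVdef
  have hβ : (2 : K) - lam * (η : K)
      = G13.Ee i s ((P : ℚ) + (R : ℚ)/2) ((Q : ℚ) + (T : ℚ)/2) ((R : ℚ)/2) ((T : ℚ)/2) := by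
    rw [hηE, hlamdef, G13.E_mul hi hs, ← G13.E_two (i := i) (s := s), G13.E_sub]
    exact G13.E_congr (by push_cast [hPdef, hRdef]; ring) (by push_cast [hQdef, hTdef]; ring)
      (by push_cast [hRdef]; ring) (by push_cast [hTdef]; ring)
  have hNβ : Algebra.norm ℚ ((2 : K) - lam * (η : K)) = ((X : ℚ))^2 + ((Y : ℚ))^2 := by
    rw [hβ, G13.norm_E hi hs bK hb0 hb1 hb2 hb3, hXdef, hYdef]
    push_cast
    ring
  have hfac : (2 * lam⁻¹ - (η : K)) * lam = (2 : K) - lam * (η : K) := by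
    rw [sub_mul, mul_assoc, inv_mul_cancel₀ hlam0, mul_one, mul_comm ((η : K)) lam]
  have h1 : Algebra.norm ℚ ((2 : K) - lam * (η : K))
      = Algebra.norm ℚ (2 * lam⁻¹ - (η : K)) * 13 := by
    rw [← hfac, map_mul, hNlam]
  have h2 : ((X^2 + Y^2 : ℤ) : ℚ) = |Algebra.norm ℚ ((2 : K) - lam * (η : K))| := by
    calc ((X^2 + Y^2 : ℤ) : ℚ) = ((X : ℚ))^2 + ((Y : ℚ))^2 := by push_cast; ring
      _ = |((X : ℚ))^2 + ((Y : ℚ))^2| := (abs_of_nonneg (by positivity)).symm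
      _ = |Algebra.norm ℚ ((2 : K) - lam * (η : K))| := by rw [hNβ]
  have hval : ((X^2 + Y^2 : ℤ) : ℚ) < 13 := by
    rw [h2, h1, abs_mul, show |(13 : ℚ)| = 13 by norm_num]
    nlinarith [abs_nonneg (Algebra.norm ℚ (2 * lam⁻¹ - (η : K))), hη]
  have hn12 : X^2 + Y^2 ≤ 12 := by
    have h13 : X^2 + Y^2 < 13 := by exact_mod_cast hval
    omega
  obtain ⟨k, hcong⟩ : ∃ k : ℤ, X + 5*Y = 4 + 13*k := by
    refine ⟨A^2 + A*C - B^2 - B*D - 3*C^2 + 3*D^2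
      - (2*A*B + A*D + B*C - 6*C*D) - 2*A - 2*B - 2*C - 6*D, ?_⟩
    rw [hXdef, hYdef, hPdef, hQdef, hRdef, hTdef]; ring
  have hQR : 4*(X^2 + Y^2) = M^2 - 13*V^2 := by
    rw [hXdef, hYdef, hMdef, hVdef]; ring
  clear_value X Y M V
  have hbX1 : -3 ≤ X := by nlinarith [sq_nonneg Y]
  have hbX2 : X ≤ 3 := by nlinarith [sq_nonneg Y]
  have hbY1 : -3 ≤ Y := by nlinarith [sq_nonneg X]
  have hbY2 : Y ≤ 3 := by nlinarith [sq_nonneg X]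
  have hcase : X^2 + Y^2 = 2 ∨ X^2 + Y^2 = 5 := by
    interval_cases X <;> interval_cases Y <;> omega
  have hMsq : ∀ z : ZMod 13, z^2 ≠ 8 ∧ z^2 ≠ 7 := by decide
  rcases hcase with hc | hc
  · have hM2 : M^2 = 8 + 13*V^2 := by rw [hc] at hQR; linarith
    have hz : ((M : ZMod 13))^2 = 8 := by
      have hcast := congrArg (fun n : ℤ => (n : ZMod 13)) hM2
      push_cast at hcast
      rw [show ((13 : ZMod 13)) = 0 by decide] at hcast
      simpa using hcast
    exact (hMsq _).1 hz
  · have hM2 : M^2 = 20 + 13*V^2 := by rw [hc] at hQR; linarith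
    have hz : ((M : ZMod 13))^2 = 7 := by
      have hcast := congrArg (fun n : ℤ => (n : ZMod 13)) hM2
      push_cast at hcast
      rw [show ((13 : ZMod 13)) = 0 by decide,
        show ((20 : ZMod 13)) = 7 by decide] at hcast
      simpa using hcast
    exact (hMsq _).2 hz
end
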